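/- arXiv:math/0611300 — 8 statements merged into one kernel-verified Lean document; each statement's English description precedes it below -/
import Mathlib

section
/- If p and q are primes (not necessarily distinct) each congruent to 3 or 7 modulo 20, then the product pq is representable by the quadratic form x^2 + 5y^2, i.e., there exist integers x, y with pq = x^2 + 5y^2. -/
private instance fact5 : Fact (Nat.Prime 5) := ⟨by norm_num⟩

lemma sq_neg_five (p : ℕ) (hp : p.Prime) (hp' : p % 20 = 3 ∨ p % 20 = 7) :
    ∃ a : ZMod p, a ^ 2 = -5 := by
  have hp2 : p ≠ 2 := by omega
  haveI : Fact p.Prime := ⟨hp⟩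
  have hpne5 : p ≠ 5 := by omega
  have h5 : ((5 : ℤ) : ZMod p) ≠ 0 := by
    rw [Ne, ZMod.intCast_zmod_eq_zero_iff_dvd]
    intro h
    have h' : p ∣ 5 := by exact_mod_cast h
    exact hpne5 ((Nat.prime_dvd_prime_iff_eq hp (by norm_num)).mp h')
  have hm4 : p % 4 = 3 := by omega
  have h1 : legendreSym p (-1) = -1 := by
    rw [legendreSym.at_neg_one hp2, ZMod.χ₄_nat_three_mod_four hm4]
  have hmod5 : ((p : ℤ) % (5:ℕ)) = (if p % 20 = 3 then 3 else 2) := by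
    rcases hp' with h | h <;> simp [h] <;> omega
  have h2 : legendreSym p 5 = -1 := by
    have hrec := legendreSym.quadratic_reciprocity_one_mod_four (p := 5) (q := p)
      (by norm_num) hp2
    norm_num at hrec
    rw [hrec, legendreSym.mod 5 p, hmod5]
    have d1 : legendreSym 5 3 = -1 := by decide
    have d2 : legendreSym 5 2 = -1 := by decide
    rcases hp' with h | h <;> simp [h, d1, d2]
  have hmul : legendreSym p (-5) = 1 := by
    have := legendreSym.mul p (-1) 5
    norm_num at this
    rw [this, h1, h2]; ring
  have hsq : IsSquare ((-5 : ℤ) : ZMod p) := by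
    rw [← legendreSym.eq_one_iff p ?_]
    · exact hmul
    · intro h
      apply h5
      have h2 : (((-5:ℤ)) : ZMod p) = -(((5:ℤ)) : ZMod p) := by push_cast; ring
      rw [h2, neg_eq_zero] at h
      exact h
  obtain ⟨a, ha⟩ := hsq
  refine ⟨a, ?_⟩
  rw [sq, ← ha]; push_cast; ring

lemma thue_lemma (p : ℕ) (hp : p.Prime) (a : ZMod p) :
    ∃ u v : ℤ, ((u : ZMod p) = a * (v : ZMod p)) ∧ u ^ 2 < p ∧ v ^ 2 < p ∧
      ¬(u = 0 ∧ v = 0) := by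
  haveI : Fact p.Prime := ⟨hp⟩
  set n := Nat.sqrt p with hn
  have hnp : n * n < p := by
    rcases lt_or_eq_of_le (Nat.sqrt_le p) with h | h
    · exact h
    · exfalso
      have hd : n ∣ p := ⟨n, h.symm⟩
      rcases (Nat.Prime.eq_one_or_self_of_dvd hp n hd) with h1 | h1
      · rw [← hn, h1] at h; have := hp.two_le; omega
      · rw [← hn, h1] at h; nlinarith [hp.two_le]
  have hcard : (Finset.univ : Finset (ZMod p)).card <
      ((Finset.range (n+1)) ×ˢ (Finset.range (n+1))).card := by
    rw [Finset.card_product, Finset.card_range, Finset.card_univ, ZMod.card]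
    calc p ≤ n * n + 2 * n := by
            have := Nat.lt_succ_sqrt p; nlinarith
      _ < (n+1) * (n+1) := by nlinarith
  obtain ⟨⟨x1, y1⟩, hx1, ⟨x2, y2⟩, hx2, hne, heq⟩ :=
    Finset.exists_ne_map_eq_of_card_lt_of_maps_to hcard
      (f := fun z => (z.1 : ZMod p) - a * z.2)
      (fun z _ => Finset.mem_univ _)
  simp only [Finset.mem_product, Finset.mem_range] at hx1 hx2
  refine ⟨(x1 : ℤ) - x2, (y1 : ℤ) - y2, ?_, ?_, ?_, ?_⟩
  · push_cast
    simp only at heq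
    linear_combination heq
  · have h1 : (x1 : ℤ) ≤ n := by exact_mod_cast Nat.lt_succ_iff.mp hx1.1
    have h2 : (x2 : ℤ) ≤ n := by exact_mod_cast Nat.lt_succ_iff.mp hx2.1
    have h3 : (0:ℤ) ≤ x1 := Int.natCast_nonneg _
    have h4 : (0:ℤ) ≤ x2 := Int.natCast_nonneg _
    have : ((n:ℤ) * n) < p := by exact_mod_cast hnp
    nlinarith
  · have h1 : (y1 : ℤ) ≤ n := by exact_mod_cast Nat.lt_succ_iff.mp hx1.2
    have h2 : (y2 : ℤ) ≤ n := by exact_mod_cast Nat.lt_succ_iff.mp hx2.2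
    have h3 : (0:ℤ) ≤ y1 := Int.natCast_nonneg _
    have h4 : (0:ℤ) ≤ y2 := Int.natCast_nonneg _
    have : ((n:ℤ) * n) < p := by exact_mod_cast hnp
    nlinarith
  · rintro ⟨hu, hv⟩
    apply hne
    have : x1 = x2 := by omega
    have : y1 = y2 := by omega
    simp_all

-- bridge: cast a quadratic equation into ZMod n
lemma cast_form (n : ℕ) (u v m : ℤ) (h : u ^ 2 + 5 * v ^ 2 = m) :
    ((u : ZMod n)) ^ 2 + 5 * (v : ZMod n) ^ 2 = (m : ZMod n) := by
  have := congrArg (fun z : ℤ => (z : ZMod n)) h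
  push_cast at this
  exact this

lemma not_three_mod4 (u v m : ℤ) (h : u ^ 2 + 5 * v ^ 2 = m) (hm : m % 4 = 3) : False := by
  have h4 := cast_form 4 u v m h
  have hm4 : (m : ZMod 4) = 3 := by
    obtain ⟨t, ht⟩ : ∃ t, m = 4 * t + 3 := ⟨m / 4, by omega⟩
    rw [ht]; push_cast; rw [show (4 : ZMod 4) = 0 by decide]; ring
  rw [hm4] at h4
  revert h4
  have : ∀ x y : ZMod 4, x ^ 2 + 5 * y ^ 2 ≠ 3 := by decide
  exact this _ _

-- from u^2+5v^2 = 2p with any integer p, get representation by 2a²+2ab+3b²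
lemma two_case (P u v : ℤ) (h : u ^ 2 + 5 * v ^ 2 = 2 * P) :
    ∃ a b : ℤ, P = 2 * a ^ 2 + 2 * a * b + 3 * b ^ 2 := by
  have h2 := cast_form 2 u v _ h
  have hz : ((2 * P : ℤ) : ZMod 2) = 0 := by
    push_cast; rw [show (2 : ZMod 2) = 0 by decide]; ring
  rw [hz] at h2
  have key : ∀ x y : ZMod 2, x ^ 2 + 5 * y ^ 2 = 0 → x - y = 0 := by decide
  have hsub : ((u - v : ℤ) : ZMod 2) = 0 := by push_cast; exact key _ _ h2
  have hdvd : (2 : ℤ) ∣ u - v := by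
    exact_mod_cast (ZMod.intCast_zmod_eq_zero_iff_dvd _ 2).mp hsub
  obtain ⟨w, hw⟩ := hdvd
  refine ⟨w, v, ?_⟩
  have h2p : 2 * P = 2 * (2 * w ^ 2 + 2 * w * v + 3 * v ^ 2) := by
    have hu : u = v + 2 * w := by omega
    rw [hu] at h
    linear_combination -h
  linarith

lemma repG (p : ℕ) (hp : p.Prime) (hp' : p % 20 = 3 ∨ p % 20 = 7) :
    ∃ a b : ℤ, (p : ℤ) = 2 * a ^ 2 + 2 * a * b + 3 * b ^ 2 := by
  obtain ⟨a, ha⟩ := sq_neg_five p hp hp'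
  obtain ⟨u, v, huv, hu, hv, hnz⟩ := thue_lemma p hp a
  haveI : Fact p.Prime := ⟨hp⟩
  have hdvd : (p : ℤ) ∣ u ^ 2 + 5 * v ^ 2 := by
    rw [← ZMod.intCast_zmod_eq_zero_iff_dvd]
    push_cast
    rw [huv]
    linear_combination ((v : ZMod p)) ^ 2 * ha
  have hpos : 0 < u ^ 2 + 5 * v ^ 2 := by
    rcases not_and_or.mp hnz with h | h
    · have h1 : 0 < u ^ 2 := by rcases lt_or_gt_of_ne h with h' | h' <;> nlinarith
      nlinarith [sq_nonneg v]
    · have h1 : 0 < v ^ 2 := by rcases lt_or_gt_of_ne h with h' | h' <;> nlinarith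
      nlinarith [sq_nonneg u]
  obtain ⟨k, hk⟩ := hdvd
  have hppos : (0 : ℤ) < p := by exact_mod_cast hp.pos
  have hk1 : 1 ≤ k := by nlinarith
  have hk5 : k ≤ 5 := by nlinarith
  have hm4 : (p : ℤ) % 4 = 3 := by omega
  interval_cases k
  · exact (not_three_mod4 u v _ hk (by omega)).elim
  · exact two_case _ u v (by linarith)
  · -- k = 3
    have h3 := cast_form 3 u v _ hk
    have hz : (((p : ℤ) * 3 : ℤ) : ZMod 3) = 0 := by
      push_cast; rw [show (3 : ZMod 3) = 0 by decide]; ring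
    rw [hz] at h3
    have key : ∀ x y : ZMod 3, x ^ 2 + 5 * y ^ 2 = 0 → x - y = 0 ∨ x + y = 0 := by decide
    rcases key _ _ h3 with h | h
    · have hdvd3 : (3 : ℤ) ∣ u - v :=
        (ZMod.intCast_zmod_eq_zero_iff_dvd _ 3).mp (by push_cast; exact h)
      obtain ⟨c, hc⟩ := hdvd3
      refine ⟨v, c, ?_⟩
      have h3p : 3 * (p : ℤ) = 3 * (2 * v ^ 2 + 2 * v * c + 3 * c ^ 2) := by
        have hu' : u = v + 3 * c := by omega
        rw [hu'] at hk
        linear_combination -hk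
      linarith
    · have hdvd3 : (3 : ℤ) ∣ u + v :=
        (ZMod.intCast_zmod_eq_zero_iff_dvd _ 3).mp (by push_cast; exact h)
      obtain ⟨c, hc⟩ := hdvd3
      refine ⟨v, -c, ?_⟩
      have h3p : 3 * (p : ℤ) = 3 * (2 * v ^ 2 + 2 * v * (-c) + 3 * (-c) ^ 2) := by
        have hu' : u = -v + 3 * c := by omega
        rw [hu'] at hk
        linear_combination -hk
      linarith
  · -- k = 4
    have h4 := cast_form 4 u v _ hk
    have hz : (((p : ℤ) * 4 : ℤ) : ZMod 4) = 0 := by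
      push_cast; rw [show (4 : ZMod 4) = 0 by decide]; ring
    rw [hz] at h4
    have key : ∀ x y : ZMod 4, x ^ 2 + 5 * y ^ 2 = 0 → 2 * x = 0 ∧ 2 * y = 0 := by decide
    obtain ⟨hx, hy⟩ := key _ _ h4
    have hdu : (4 : ℤ) ∣ 2 * u :=
      (ZMod.intCast_zmod_eq_zero_iff_dvd _ 4).mp (by push_cast; exact hx)
    have hdv : (4 : ℤ) ∣ 2 * v :=
      (ZMod.intCast_zmod_eq_zero_iff_dvd _ 4).mp (by push_cast; exact hy)
    obtain ⟨u', hu'⟩ : (2 : ℤ) ∣ u := by omega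
    obtain ⟨v', hv'⟩ : (2 : ℤ) ∣ v := by omega
    have hform : u' ^ 2 + 5 * v' ^ 2 = (p : ℤ) := by
      have h4p : 4 * (u' ^ 2 + 5 * v' ^ 2) = 4 * (p : ℤ) := by
        rw [hu', hv'] at hk
        linear_combination hk
      linarith
    exact (not_three_mod4 u' v' _ hform hm4).elim
  · -- k = 5
    have h5 : (5 : ℤ) ∣ u ^ 2 := ⟨(p : ℤ) - v ^ 2, by linarith⟩
    have hpr : Prime (5 : ℤ) := by norm_num
    obtain ⟨u', hu'⟩ := hpr.dvd_of_dvd_pow h5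
    have hform : v ^ 2 + 5 * u' ^ 2 = (p : ℤ) := by
      have h5p : 5 * (v ^ 2 + 5 * u' ^ 2) = 5 * (p : ℤ) := by
        rw [hu'] at hk
        linear_combination hk
      linarith
    exact (not_three_mod4 v u' _ hform hm4).elim

theorem fermat_product_rep (p q : ℕ) (hp : p.Prime) (hq : q.Prime)
    (hp' : p % 20 = 3 ∨ p % 20 = 7) (hq' : q % 20 = 3 ∨ q % 20 = 7) :
    ∃ x y : ℤ, ((p * q : ℕ) : ℤ) = x ^ 2 + 5 * y ^ 2 := by
  obtain ⟨a, b, hab⟩ := repG p hp hp'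
  obtain ⟨c, d, hcd⟩ := repG q hq hq'
  refine ⟨2 * a * c + a * d + b * c - 2 * b * d, a * d + b * c + b * d, ?_⟩
  push_cast
  rw [hab, hcd]
  ring
end

section
/- A prime p is represented by the form x^2 + 5y^2 (i.e., p = x^2 + 5y^2 for some integers x, y) if and only if p = 5 or p ≡ 1 (mod 20) or p ≡ 9 (mod 20). -/
-- Thue's lemma
lemma thue5 (p : ℕ) (hp : p.Prime) (c : ℤ) :
    ∃ x y : ℤ, (p:ℤ) ∣ (x - c*y) ∧ x.natAbs ≤ Nat.sqrt p ∧ y.natAbs ≤ Nat.sqrt p ∧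
      (x ≠ 0 ∨ y ≠ 0) := by
  haveI : Fact p.Prime := ⟨hp⟩
  set n := Nat.sqrt p with hn
  have hcard : Fintype.card (ZMod p) < Fintype.card (Fin (n+1) × Fin (n+1)) := by
    simp only [ZMod.card, Fintype.card_prod, Fintype.card_fin]
    exact Nat.lt_succ_sqrt p
  obtain ⟨⟨a,b⟩, ⟨a',b'⟩, hne, heq⟩ := Fintype.exists_ne_map_eq_of_card_lt
      (fun q : Fin (n+1) × Fin (n+1) => (((q.1 : ℤ) - c * (q.2 : ℤ) : ℤ) : ZMod p)) hcard
  refine ⟨(a:ℤ) - a', (b:ℤ) - b', ?_, ?_, ?_, ?_⟩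
  · rw [← ZMod.intCast_zmod_eq_zero_iff_dvd]
    push_cast at heq ⊢
    linear_combination heq
  · have h1 : (a:ℕ) ≤ n := a.is_le
    have h2 : (a':ℕ) ≤ n := a'.is_le
    omega
  · have h1 : (b:ℕ) ≤ n := b.is_le
    have h2 : (b':ℕ) ≤ n := b'.is_le
    omega
  · by_contra hc
    push_neg at hc
    apply hne
    have h1 : (a:ℕ) = a' := by omega
    have h2 : (b:ℕ) = b' := by omega
    ext <;> simp [Fin.ext_iff, h1, h2]

lemma no_two_rep (p : ℕ) (hp4 : p % 4 = 1) (u v : ℤ) : u^2 + 5*v^2 ≠ 2*(p:ℤ) := by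
  intro h
  rcases Int.even_or_odd u with ⟨c, hc⟩ | ⟨c, hc⟩ <;>
    rcases Int.even_or_odd v with ⟨d, hd⟩ | ⟨d, hd⟩ <;> subst hc hd
  · obtain ⟨A, hA⟩ : ∃ A:ℤ, 4*A = 2*(p:ℤ) := ⟨c^2+5*d^2, by linear_combination h⟩
    omega
  · obtain ⟨A, hA⟩ : ∃ A:ℤ, 4*A+5 = 2*(p:ℤ) := ⟨c^2+5*(d^2+d), by linear_combination h⟩
    omega
  · obtain ⟨A, hA⟩ : ∃ A:ℤ, 4*A+1 = 2*(p:ℤ) := ⟨c^2+c+5*d^2, by linear_combination h⟩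
    omega
  · obtain ⟨t, ht⟩ := Int.even_mul_succ_self c
    obtain ⟨s, hs⟩ := Int.even_mul_succ_self d
    obtain ⟨A, hA⟩ : ∃ A:ℤ, 8*A+6 = 2*(p:ℤ) :=
      ⟨t+5*s, by linear_combination h - 4*ht - 20*hs⟩
    omega

lemma key_rep (p : ℕ) (hp : p.Prime) (hp4 : p % 4 = 1) (hsq : IsSquare (-5 : ZMod p)) :
    ∃ x y : ℤ, (p:ℤ) = x^2 + 5*y^2 := by
  haveI : Fact p.Prime := ⟨hp⟩
  obtain ⟨c0, hc0⟩ := hsq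
  -- lift square root to ℤ
  set c : ℤ := (c0.val : ℤ) with hcdef
  have hc : (p:ℤ) ∣ c^2 + 5 := by
    rw [← ZMod.intCast_zmod_eq_zero_iff_dvd]
    have hcc : ((c:ℤ) : ZMod p) = c0 := by
      rw [hcdef]; push_cast; rw [ZMod.natCast_val, ZMod.cast_id]
    push_cast
    rw [show ((c:ℤ) : ZMod p) = c0 from hcc] -- may not fire after push_cast
    rw [sq, ← hc0]; ring
  obtain ⟨x, y, hdvd, hxb, hyb, hne⟩ := thue5 p hp c
  -- p divides x^2 + 5 y^2
  have hNd : (p:ℤ) ∣ x^2 + 5*y^2 := by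
    have h1 : (p:ℤ) ∣ (x - c*y) * (x + c*y) := hdvd.mul_right _
    have h2 : (p:ℤ) ∣ (c^2 + 5) * y^2 := hc.mul_right _
    have := dvd_add h1 h2
    have heq : (x - c*y) * (x + c*y) + (c^2 + 5) * y^2 = x^2 + 5*y^2 := by ring
    rwa [heq] at this
  have hnotsq : ∀ z : ℤ, z^2 ≠ (p:ℤ) := by
    intro z hz
    have hzn : z.natAbs * z.natAbs = p := by
      have := congrArg Int.natAbs hz
      simpa [sq, Int.natAbs_mul] using this
    rcases (hp.eq_one_or_self_of_dvd z.natAbs ⟨z.natAbs, hzn.symm⟩) with h | h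
    · have := hp.one_lt
      rw [h] at hzn; omega
    · rw [h] at hzn
      have := hp.two_le
      nlinarith
  have hsl : ∀ z : ℤ, z.natAbs ≤ Nat.sqrt p → z^2 < (p:ℤ) := by
    intro z hz
    have h1 : z.natAbs ^ 2 ≤ Nat.sqrt p ^ 2 := Nat.pow_le_pow_left hz 2
    have h2 : Nat.sqrt p ^ 2 ≤ p := Nat.sqrt_le' p
    have h3 : z^2 ≤ (p:ℤ) := by
      have h4 : ((z.natAbs:ℤ)) ^ 2 ≤ (p:ℤ) := by exact_mod_cast le_trans h1 h2
      rwa [Int.natAbs_sq] at h4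
    exact lt_of_le_of_ne h3 (hnotsq z)
  have hx2 : x^2 < (p:ℤ) := hsl x hxb
  have hy2 : y^2 < (p:ℤ) := hsl y hyb
  have hpos : 0 < x^2 + 5*y^2 := by
    rcases hne with h | h
    · have : 0 < x^2 := by positivity
      nlinarith [sq_nonneg y]
    · have : 0 < y^2 := by positivity
      nlinarith [sq_nonneg x]
  obtain ⟨m, hm⟩ := hNd
  have hppos : (0:ℤ) < p := by exact_mod_cast hp.pos
  have hm1 : 1 ≤ m := by nlinarith
  have hm5 : m ≤ 5 := by nlinarith
  interval_cases m
  -- m = 1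
  · exact ⟨x, y, by linarith⟩
  -- m = 2
  · exact absurd (by linarith : x^2 + 5*y^2 = 2*(p:ℤ)) (no_two_rep p hp4 x y)
  -- m = 3
  · exfalso
    have h3 : ((x:ZMod 3) = 0 ∧ (y:ZMod 3) = 0) ∨ ((x:ZMod 3) = (y:ZMod 3)) ∨
        ((x:ZMod 3) = -(y:ZMod 3)) := by
      have hcast : (x:ZMod 3)^2 + 5*(y:ZMod 3)^2 = 0 := by
        have := congrArg (fun z : ℤ => (z : ZMod 3)) hm
        push_cast at this
        rw [this]
        exact mul_eq_zero_of_right _ (show (3:ZMod 3) = 0 by decide)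
      revert hcast
      generalize (x:ZMod 3) = a
      generalize (y:ZMod 3) = b
      revert a b
      decide
    rcases h3 with ⟨hx3, hy3⟩ | h3 | h3
    · obtain ⟨a, ha⟩ := (ZMod.intCast_zmod_eq_zero_iff_dvd x 3).mp hx3
      obtain ⟨b, hb⟩ := (ZMod.intCast_zmod_eq_zero_iff_dvd y 3).mp hy3
      have h9 : 3*(3*(a^2+5*b^2)) = 3*(p:ℤ) := by
        subst ha hb; linear_combination hm
      have h9' : 3*(a^2+5*b^2) = (p:ℤ) := by
        have := mul_left_cancel₀ (by norm_num : (3:ℤ) ≠ 0) h9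
        linarith
      have : (3:ℕ) ∣ p := by
        have : (3:ℤ) ∣ (p:ℤ) := ⟨a^2+5*b^2, h9'.symm⟩
        exact_mod_cast this
      have := (Nat.prime_dvd_prime_iff_eq (by norm_num) hp).mp this
      omega
    · have : ((x - y : ℤ) : ZMod 3) = 0 := by push_cast; rw [h3]; ring
      obtain ⟨v, hv⟩ := (ZMod.intCast_zmod_eq_zero_iff_dvd _ 3).mp this
      have hx : x = 3*v + y := by omega
      subst hx
      have hpe : 3*(3*v^2+2*v*y+2*y^2) = 3*(p:ℤ) := by linear_combination hm
      have hpe' : 3*v^2+2*v*y+2*y^2 = (p:ℤ) :=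
        mul_left_cancel₀ (by norm_num : (3:ℤ) ≠ 0) hpe
      exact no_two_rep p hp4 (v+2*y) v (by linear_combination 2*hpe')
    · have : ((x + y : ℤ) : ZMod 3) = 0 := by push_cast; rw [h3]; ring
      obtain ⟨v, hv⟩ := (ZMod.intCast_zmod_eq_zero_iff_dvd _ 3).mp this
      have hx : x = 3*v - y := by omega
      subst hx
      have hpe : 3*(3*v^2-2*v*y+2*y^2) = 3*(p:ℤ) := by linear_combination hm
      have hpe' : 3*v^2-2*v*y+2*y^2 = (p:ℤ) :=
        mul_left_cancel₀ (by norm_num : (3:ℤ) ≠ 0) hpe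
      exact no_two_rep p hp4 (v-2*y) v (by linear_combination 2*hpe')
  -- m = 4
  · rcases Int.even_or_odd x with ⟨a, ha⟩ | ⟨a, ha⟩ <;>
      rcases Int.even_or_odd y with ⟨b, hb⟩ | ⟨b, hb⟩ <;> subst ha hb
    · refine ⟨a, b, ?_⟩
      have h4 : 4*(a^2+5*b^2) = 4*(p:ℤ) := by linear_combination hm
      have := mul_left_cancel₀ (by norm_num : (4:ℤ) ≠ 0) h4
      linarith
    · exfalso
      obtain ⟨A, hA⟩ : ∃ A:ℤ, 4*A+5 = 4*(p:ℤ) := ⟨a^2+5*(b^2+b), by linear_combination hm⟩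
      omega
    · exfalso
      obtain ⟨A, hA⟩ : ∃ A:ℤ, 4*A+1 = 4*(p:ℤ) := ⟨a^2+a+5*b^2, by linear_combination hm⟩
      omega
    · exfalso
      obtain ⟨A, hA⟩ : ∃ A:ℤ, 4*A+6 = 4*(p:ℤ) :=
        ⟨a^2+a+5*(b^2+b), by linear_combination hm⟩
      omega
  -- m = 5
  · haveI : Fact (Nat.Prime 5) := ⟨by norm_num⟩
    have hx5 : ((x:ZMod 5))^2 = 0 := by
      have h0 := congrArg (fun z : ℤ => (z : ZMod 5)) hm
      push_cast at h0
      have h5 : (5 : ZMod 5) = 0 := by exact_mod_cast ZMod.natCast_self 5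
      linear_combination h0 + ((p:ZMod 5) - (y:ZMod 5)^2) * h5
    have hx50 : (x : ZMod 5) = 0 := by
      exact pow_eq_zero_iff (by norm_num) |>.mp hx5
    obtain ⟨a, ha⟩ := (ZMod.intCast_zmod_eq_zero_iff_dvd x 5).mp hx50
    subst ha
    refine ⟨y, a, ?_⟩
    have h5 : 5*(y^2+5*a^2) = 5*(p:ℤ) := by linear_combination hm
    have := mul_left_cancel₀ (by norm_num : (5:ℤ) ≠ 0) h5
    linarith

lemma mod20_refute (v : ℕ) (hv : ¬(v = 1 ∨ v = 9)) (hv20 : v < 20)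
    (h : ∃ a b : ZMod 20, ((v:ℕ) : ZMod 20) = a^2 + 5*b^2)
    (hodd : v % 2 = 1) (h5 : v % 5 ≠ 0) : False := by
  obtain ⟨a, b, hab⟩ := h
  interval_cases v <;> simp_all <;> revert hab <;> revert a b <;> decide

theorem euler_prime_rep (p : ℕ) (hp : p.Prime) :
    (∃ x y : ℤ, (p : ℤ) = x ^ 2 + 5 * y ^ 2) ↔ p = 5 ∨ p % 20 = 1 ∨ p % 20 = 9 := by
  constructor
  · rintro ⟨x, y, hxy⟩
    by_cases h5 : p = 5
    · exact Or.inl h5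
    right
    by_contra hcon
    push_neg at hcon
    -- p ≠ 2 : else 2 = x^2+5y^2, refute mod 20 too; handle uniformly
    have hmod : ∃ a b : ZMod 20, ((p % 20 : ℕ) : ZMod 20) = a^2 + 5*b^2 := by
      refine ⟨(x : ZMod 20), (y : ZMod 20), ?_⟩
      rw [ZMod.natCast_mod]
      have := congrArg (fun z : ℤ => (z : ZMod 20)) hxy
      push_cast at this
      exact this
    have hp2 : p % 2 = 1 := by
      by_cases h2 : p = 2
      · subst h2
        obtain ⟨a, b, hab⟩ := hmod
        revert hab; revert a b; decide
      · exact Nat.odd_iff.mp (hp.odd_of_ne_two h2)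
    have hp5 : p % 5 ≠ 0 := by
      intro h
      have : (5:ℕ) ∣ p := Nat.dvd_of_mod_eq_zero h
      have := (Nat.prime_dvd_prime_iff_eq (by norm_num) hp).mp this
      omega
    exact mod20_refute (p % 20) (by omega) (Nat.mod_lt _ (by norm_num))
      hmod (by omega) (by omega)
  · rintro (rfl | h | h)
    · exact ⟨0, 1, by norm_num⟩
    all_goals {
      haveI : Fact p.Prime := ⟨hp⟩
      haveI : Fact (Nat.Prime 5) := ⟨by norm_num⟩
      have hp4 : p % 4 = 1 := by omega
      have hs1 : IsSquare (-1 : ZMod p) := ZMod.exists_sq_eq_neg_one_iff.mpr (by omega)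
      have hs5 : IsSquare ((5:ℕ) : ZMod p) := by
        rw [ZMod.exists_sq_eq_prime_iff_of_mod_four_eq_one hp4 (by norm_num)]
        rw [← ZMod.natCast_mod]
        have : p % 5 = 1 ∨ p % 5 = 4 := by omega
        rcases this with h' | h' <;> rw [h']
        · exact ⟨1, by rfl⟩
        · exact ⟨2, by rfl⟩
      have hs : IsSquare (-5 : ZMod p) := by
        have : (-5 : ZMod p) = (-1) * ((5:ℕ) : ZMod p) := by push_cast; ring
        rw [this]
        exact hs1.mul hs5
      exact key_rep p hp hp4 hs
    }
end

section
/- For an odd prime p, 2p is represented by x^2 + 5y^2 (i.e., 2p = x^2 + 5y^2 for some integers x, y) if and only if p ≡ 3 (mod 20) or p ≡ 7 (mod 20). -/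
lemma no_rep_mod4 (a b : ℤ) (n : ℕ) (hn : n % 4 = 3) : (n : ℤ) ≠ a ^ 2 + 5 * b ^ 2 := by
  intro h
  rcases Int.even_or_odd a with ⟨m, hm⟩ | ⟨m, hm⟩ <;>
    rcases Int.even_or_odd b with ⟨k, hk⟩ | ⟨k, hk⟩ <;> subst hm hk
  · obtain ⟨K, hK⟩ : ∃ K : ℤ, (n : ℤ) = 4 * K + 0 := ⟨m ^ 2 + 5 * k ^ 2, by linear_combination h⟩
    omega
  · obtain ⟨K, hK⟩ : ∃ K : ℤ, (n : ℤ) = 4 * K + 5 :=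
      ⟨m ^ 2 + 5 * k ^ 2 + 5 * k, by linear_combination h⟩
    omega
  · obtain ⟨K, hK⟩ : ∃ K : ℤ, (n : ℤ) = 4 * K + 1 :=
      ⟨m ^ 2 + m + 5 * k ^ 2, by linear_combination h⟩
    omega
  · obtain ⟨K, hK⟩ : ∃ K : ℤ, (n : ℤ) = 4 * K + 6 :=
      ⟨m ^ 2 + m + 5 * k ^ 2 + 5 * k, by linear_combination h⟩
    omega

lemma thue (p : ℕ) (hp : p.Prime) (t : ZMod p) :
    ∃ a b : ℤ, (a : ZMod p) = t * (b : ZMod p) ∧ a ^ 2 < p ∧ b ^ 2 < p ∧ ¬(a = 0 ∧ b = 0) := by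
  haveI : Fact p.Prime := ⟨hp⟩
  set s := Nat.sqrt p with hs
  have hslt : s * s < p := by
    rcases Nat.lt_or_ge (s * s) p with h | h
    · exact h
    · exfalso
      have heq : s * s = p := le_antisymm (by simpa [pow_two] using Nat.sqrt_le' p) h
      rcases (Nat.Prime.eq_one_or_self_of_dvd hp s ⟨s, heq.symm⟩) with h1 | h1
      · rw [h1] at heq; have := hp.two_le; omega
      · nlinarith [hp.two_le]
  have hcard : Fintype.card (ZMod p) < ((Finset.range (s+1)) ×ˢ (Finset.range (s+1))).card := by
    rw [ZMod.card, Finset.card_product, Finset.card_range]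
    have := Nat.lt_succ_sqrt' p
    nlinarith [this]
  obtain ⟨⟨x1, y1⟩, hx1, ⟨x2, y2⟩, hx2, hne, heq⟩ :=
    Finset.exists_ne_map_eq_of_card_lt_of_maps_to hcard
      (f := fun q : ℕ × ℕ => (q.1 : ZMod p) - t * (q.2 : ZMod p))
      (fun q _ => Finset.mem_univ _)
  simp only [Finset.mem_product, Finset.mem_range] at hx1 hx2
  refine ⟨(x1 : ℤ) - x2, (y1 : ℤ) - y2, ?_, ?_, ?_, ?_⟩
  · push_cast
    have : (x1 : ZMod p) - t * (y1 : ZMod p) = (x2 : ZMod p) - t * (y2 : ZMod p) := heq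
    ring_nf
    linear_combination this
  · have h1 : ((x1 : ℤ) - x2) ^ 2 ≤ (s : ℤ) * s := by nlinarith [hx1.1, hx1.2, hx2.1, hx2.2]
    calc ((x1:ℤ) - x2)^2 ≤ (s:ℤ)*s := h1
    _ < p := by exact_mod_cast hslt
  · have h1 : ((y1 : ℤ) - y2) ^ 2 ≤ (s : ℤ) * s := by nlinarith [hx1.1, hx1.2, hx2.1, hx2.2]
    calc ((y1:ℤ) - y2)^2 ≤ (s:ℤ)*s := h1
    _ < p := by exact_mod_cast hslt
  · rintro ⟨ha, hb⟩
    apply hne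
    have : x1 = x2 := by omega
    have : y1 = y2 := by omega
    simp_all

lemma neg_five_is_square (p : ℕ) (hp : p.Prime) (h20 : p % 20 = 3 ∨ p % 20 = 7) :
    IsSquare (-5 : ZMod p) := by
  haveI : Fact p.Prime := ⟨hp⟩
  haveI : Fact (Nat.Prime 5) := ⟨by norm_num⟩
  have hp2 : p ≠ 2 := by omega
  have hp4 : p % 4 = 3 := by omega
  have hp5 : p % 5 = 2 ∨ p % 5 = 3 := by omega
  have hne : ((-5 : ℤ) : ZMod p) ≠ 0 := by
    rw [Int.cast_neg, neg_ne_zero]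
    have : ((5 : ℤ) : ZMod p) = ((5 : ℕ) : ZMod p) := by push_cast; ring
    rw [this, Ne, ZMod.natCast_eq_zero_iff]
    intro hdvd
    have : p = 5 := (Nat.prime_dvd_prime_iff_eq hp (by norm_num)).mp hdvd
    omega
  have key : legendreSym p (-5) = 1 := by
    have hm : legendreSym p (-5) = legendreSym p (-1) * legendreSym p 5 := by
      rw [show (-5 : ℤ) = -1 * 5 by norm_num, legendreSym.mul]
    have h1 : legendreSym p (-1) = -1 := by
      rw [legendreSym.at_neg_one hp2, ZMod.χ₄_nat_eq_if_mod_four]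
      simp [hp4]
      omega
    have h5 : legendreSym p 5 = -1 := by
      have hrec : legendreSym p 5 = legendreSym 5 p :=
        legendreSym.quadratic_reciprocity_one_mod_four (p := 5) (q := p) (by norm_num) hp2
      rw [hrec, legendreSym.mod]
      have h5' : (p : ℤ) % (5 : ℕ) = ((p % 5 : ℕ) : ℤ) := by
        push_cast
        omega
      rw [h5']
      rcases hp5 with h | h <;> rw [h] <;> norm_num
    rw [hm, h1, h5]; norm_num
  have := (legendreSym.eq_one_iff p hne).mp key
  simpa using this

theorem euler_two_p_rep (p : ℕ) (hp : p.Prime) (hodd : p ≠ 2) :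
    (∃ x y : ℤ, ((2 * p : ℕ) : ℤ) = x ^ 2 + 5 * y ^ 2) ↔ p % 20 = 3 ∨ p % 20 = 7 := by
  have hp2 : p % 2 = 1 := by
    rcases hp.eq_two_or_odd with h | h
    · omega
    · exact h
  constructor
  · rintro ⟨x, y, hxy⟩
    push_cast at hxy
    -- p ≠ 5
    have hp5ne : p ≠ 5 := by
      rintro rfl
      norm_num at hxy
      have hx1 : -4 ≤ x := by nlinarith [sq_nonneg (x + 5), sq_nonneg y]
      have hx2 : x ≤ 4 := by nlinarith [sq_nonneg (x - 5), sq_nonneg y]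
      have hy1 : -2 ≤ y := by nlinarith [sq_nonneg (y + 2), sq_nonneg x]
      have hy2 : y ≤ 2 := by nlinarith [sq_nonneg (y - 2), sq_nonneg x]
      interval_cases x <;> interval_cases y <;> omega
    -- mod 8 analysis
    have h8 : 2 * (p : ZMod 8) = (x : ZMod 8) ^ 2 + 5 * (y : ZMod 8) ^ 2 := by
      have := congrArg (fun z : ℤ => (z : ZMod 8)) hxy
      push_cast at this
      exact this
    have claim8 : ∀ w u v : ZMod 8, (w = 1 ∨ w = 3 ∨ w = 5 ∨ w = 7) →
        2 * w = u ^ 2 + 5 * v ^ 2 → (w = 3 ∨ w = 7) := by decide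
    have hcast8 : (p : ZMod 8) = ((p % 8 : ℕ) : ZMod 8) := (ZMod.natCast_mod p 8).symm
    have hp8 : p % 8 = 3 ∨ p % 8 = 7 := by
      have hmem : p % 8 = 1 ∨ p % 8 = 3 ∨ p % 8 = 5 ∨ p % 8 = 7 := by omega
      have hw : ((p : ZMod 8) = 1 ∨ (p : ZMod 8) = 3 ∨ (p : ZMod 8) = 5 ∨ (p : ZMod 8) = 7) := by
        rcases hmem with h | h | h | h <;> rw [hcast8, h] <;> norm_num
      have := claim8 _ _ _ hw h8
      rcases hmem with h | h | h | h
      · exfalso; rw [hcast8, h] at this; revert this; decide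
      · left; exact h
      · exfalso; rw [hcast8, h] at this; revert this; decide
      · right; exact h
    -- mod 5 analysis
    have h5 : 2 * (p : ZMod 5) = (x : ZMod 5) ^ 2 := by
      have := congrArg (fun z : ℤ => (z : ZMod 5)) hxy
      push_cast at this
      rw [show (5 : ZMod 5) = 0 by decide] at this
      simpa using this
    have hp5ndvd : p % 5 ≠ 0 := by
      intro h
      have : (5 : ℕ) ∣ p := by omega
      have : p = 5 := ((Nat.prime_dvd_prime_iff_eq (by norm_num) hp).mp this).symm
      exact hp5ne this
    have claim5 : ∀ w u : ZMod 5, (w = 1 ∨ w = 2 ∨ w = 3 ∨ w = 4) →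
        2 * w = u ^ 2 → (w = 2 ∨ w = 3) := by decide
    have hcast5 : (p : ZMod 5) = ((p % 5 : ℕ) : ZMod 5) := (ZMod.natCast_mod p 5).symm
    have hp5 : p % 5 = 2 ∨ p % 5 = 3 := by
      have hmem : p % 5 = 1 ∨ p % 5 = 2 ∨ p % 5 = 3 ∨ p % 5 = 4 := by omega
      have hw : ((p : ZMod 5) = 1 ∨ (p : ZMod 5) = 2 ∨ (p : ZMod 5) = 3 ∨ (p : ZMod 5) = 4) := by
        rcases hmem with h | h | h | h <;> rw [hcast5, h] <;> norm_num
      have := claim5 _ _ hw h5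
      rcases hmem with h | h | h | h
      · exfalso; rw [hcast5, h] at this; revert this; decide
      · left; exact h
      · right; exact h
      · exfalso; rw [hcast5, h] at this; revert this; decide
    omega
  · intro h20
    have hp4 : p % 4 = 3 := by omega
    by_cases hp3 : p = 3
    · exact ⟨1, 1, by norm_num [hp3]⟩
    obtain ⟨t, ht⟩ := neg_five_is_square p hp h20
    obtain ⟨a, b, hab, ha, hb, hne0⟩ := thue p hp t
    have hz : (((a ^ 2 + 5 * b ^ 2 : ℤ)) : ZMod p) = 0 := by
      push_cast
      rw [hab]
      linear_combination (-(b : ZMod p) ^ 2) * ht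
    obtain ⟨k, hk⟩ := (ZMod.intCast_zmod_eq_zero_iff_dvd _ p).mp hz
    have hppos : (0 : ℤ) < p := by exact_mod_cast hp.pos
    have hpos : 0 < a ^ 2 + 5 * b ^ 2 := by
      have : a ≠ 0 ∨ b ≠ 0 := by tauto
      rcases this with h | h
      · have : 1 ≤ a ^ 2 := by nlinarith [sq_nonneg a, Int.one_le_abs h, sq_abs a]
        nlinarith [sq_nonneg b]
      · have : 1 ≤ b ^ 2 := by nlinarith [sq_nonneg b, Int.one_le_abs h, sq_abs b]
        nlinarith [sq_nonneg a]
    have hk1 : 1 ≤ k := by nlinarith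
    have hk5 : k ≤ 5 := by nlinarith
    interval_cases k
    -- k = 1
    · exact absurd (by linarith : (p : ℤ) = a ^ 2 + 5 * b ^ 2) (no_rep_mod4 a b p hp4)
    -- k = 2
    · exact ⟨a, b, by push_cast; linarith⟩
    -- k = 3
    · have h3 : (a : ZMod 3) ^ 2 + 5 * (b : ZMod 3) ^ 2 = 0 := by
        have hc := congrArg (fun z : ℤ => (z : ZMod 3)) hk
        push_cast at hc
        rw [hc, show (3 : ZMod 3) = 0 by decide, mul_zero]
      have hcases := (by decide : ∀ u v : ZMod 3, u ^ 2 + 5 * v ^ 2 = 0 →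
        (u = 0 ∧ v = 0) ∨ u = v ∨ u = -v) _ _ h3
      rcases hcases with ⟨hu, hv⟩ | hu | hu
      · exfalso
        obtain ⟨a', ha'⟩ := (ZMod.intCast_zmod_eq_zero_iff_dvd a 3).mp hu
        obtain ⟨b', hb'⟩ := (ZMod.intCast_zmod_eq_zero_iff_dvd b 3).mp hv
        rw [ha', hb'] at hk
        have h33 : 3 * (p : ℤ) = 3 * (3 * (a' ^ 2 + 5 * b' ^ 2)) := by linear_combination -hk
        have hpd : (p : ℤ) = 3 * (a' ^ 2 + 5 * b' ^ 2) :=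
          mul_left_cancel₀ (by norm_num : (3 : ℤ) ≠ 0) h33
        have : (3 : ℕ) ∣ p := by
          have : (3 : ℤ) ∣ (p : ℤ) := ⟨_, hpd⟩
          exact_mod_cast this
        exact hp3 ((Nat.prime_dvd_prime_iff_eq (by norm_num) hp).mp this).symm
      · obtain ⟨Y, hY⟩ : (3 : ℤ) ∣ (a - b) := by
          apply (ZMod.intCast_zmod_eq_zero_iff_dvd _ 3).mp
          push_cast
          rw [hu]; ring
        obtain ⟨X, hX⟩ : (3 : ℤ) ∣ (a + 5 * b) := ⟨Y + 2 * b, by linarith⟩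
        refine ⟨X, Y, ?_⟩
        push_cast
        have h9 : 9 * (2 * (p : ℤ)) = 9 * (X ^ 2 + 5 * Y ^ 2) := by
          linear_combination (-6) * hk + (a + 5 * b + 3 * X) * hX + 5 * (a - b + 3 * Y) * hY
        have := mul_left_cancel₀ (by norm_num : (9 : ℤ) ≠ 0) h9
        linarith
      · obtain ⟨Y, hY⟩ : (3 : ℤ) ∣ (a + b) := by
          apply (ZMod.intCast_zmod_eq_zero_iff_dvd _ 3).mp
          push_cast
          rw [hu]; ring
        obtain ⟨X, hX⟩ : (3 : ℤ) ∣ (a - 5 * b) := ⟨Y - 2 * b, by linarith⟩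
        refine ⟨X, Y, ?_⟩
        push_cast
        have h9 : 9 * (2 * (p : ℤ)) = 9 * (X ^ 2 + 5 * Y ^ 2) := by
          linear_combination (-6) * hk + (a - 5 * b + 3 * X) * hX + 5 * (a + b + 3 * Y) * hY
        have := mul_left_cancel₀ (by norm_num : (9 : ℤ) ≠ 0) h9
        linarith
    -- k = 4
    · exfalso
      rcases Int.even_or_odd a with ⟨m, hm⟩ | ⟨m, hm⟩ <;>
        rcases Int.even_or_odd b with ⟨n, hn⟩ | ⟨n, hn⟩ <;> subst hm hn
      · have h4 : 4 * (p : ℤ) = 4 * (m ^ 2 + 5 * n ^ 2) := by linear_combination -hk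
        exact no_rep_mod4 m n p hp4 (mul_left_cancel₀ (by norm_num : (4 : ℤ) ≠ 0) h4)
      · obtain ⟨K, hK⟩ : ∃ K : ℤ, (p : ℤ) * 4 = 4 * K + 5 :=
          ⟨m ^ 2 + 5 * n ^ 2 + 5 * n, by linear_combination -hk⟩
        omega
      · obtain ⟨K, hK⟩ : ∃ K : ℤ, (p : ℤ) * 4 = 4 * K + 1 :=
          ⟨m ^ 2 + m + 5 * n ^ 2, by linear_combination -hk⟩
        omega
      · obtain ⟨K, hK⟩ : ∃ K : ℤ, (p : ℤ) * 4 = 4 * K + 6 :=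
          ⟨m ^ 2 + m + 5 * n ^ 2 + 5 * n, by linear_combination -hk⟩
        omega
    -- k = 5
    · exfalso
      have h5a : ((a : ℤ) : ZMod 5) = 0 := by
        have hc := congrArg (fun z : ℤ => (z : ZMod 5)) hk
        push_cast at hc
        rw [show (5 : ZMod 5) = 0 by decide] at hc
        have : (a : ZMod 5) ^ 2 = 0 := by
          simpa using hc
        exact (by decide : ∀ u : ZMod 5, u ^ 2 = 0 → u = 0) _ this
      obtain ⟨c, hc⟩ := (ZMod.intCast_zmod_eq_zero_iff_dvd a 5).mp h5a
      rw [hc] at hk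
      have h25 : 5 * (p : ℤ) = 5 * (b ^ 2 + 5 * c ^ 2) := by linear_combination -hk
      exact no_rep_mod4 b c p hp4 (mul_left_cancel₀ (by norm_num : (5 : ℤ) ≠ 0) h25)
end

section
/- Let r(n) denote the number of pairs (x,y) of integers with x^2 + y^2 = n. Then for every positive integer n, r(n) = 4 * ∑_{d | n} χ(d), where χ is the nontrivial Dirichlet character mod 4 (χ(d) = 1 if d ≡ 1 mod 4, χ(d) = -1 if d ≡ 3 mod 4, χ(d) = 0 if d even). -/
/-- The nontrivial Dirichlet character mod 4 (Kronecker symbol (-4/d)). -/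
def chi4 (d : ℕ) : ℤ := if d % 4 = 1 then 1 else if d % 4 = 3 then -1 else 0

/-!
The solutions of `x² + y² = n` are the Gaussian integers of norm `n`. Since `ℤ[i]` is a UFD with
the four units `±1, ±i`, `r(n) = 4 A(n)`, where `A(n)` counts the associate classes of norm `n`.
`A` is multiplicative: for coprime `m, n` a class of norm `mn` is uniquely a product of classes of
norms `m` and `n`. At prime powers, `1 + i` is associate to its conjugate, so there is one class
of norm `2^k`; a prime `p ≡ 3 mod 4` stays prime, so there is one class of norm `p^k` for even `k`
and none for odd `k`; a prime `p ≡ 1 mod 4` splits as `π π̄` with `π, π̄` not associate, giving the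
`k + 1` classes `π^i π̄^(k-i)`. In every case `A(p^k) = ∑_{i ≤ k} χ(p)^i`, which is the value at
`p^k` of the multiplicative function `n ↦ ∑_{d ∣ n} χ(d)`.
-/

open ZMod (χ₄)

local notation "ℤ[i]" => GaussianInt

theorem Associates.natCard_subtype_mk {α : Type*} [CommMonoidWithZero α] [IsCancelMulZero α]
    {P : Associates α → Prop} (hP : ∀ a, P a → a ≠ 0) :
    Nat.card {x : α // P (Associates.mk x)} = Nat.card αˣ * Nat.card {a // P a} := by
  let f : αˣ × {a // P a} → {x : α // P (Associates.mk x)} := fun ua =>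
    ⟨Quot.out ua.2.1 * ua.1, by
      rw [Associates.mk_eq_mk_iff_associated.mpr (associated_mul_unit_left _ _ ua.1.isUnit),
        Associates.quot_out]
      exact ua.2.2⟩
  have hf : Function.Bijective f := by
    refine ⟨?_, fun ⟨x, hx⟩ => ?_⟩
    · rintro ⟨u, a, ha⟩ ⟨v, b, hb⟩ h
      have hx : Quot.out a * u = Quot.out b * v := congrArg Subtype.val h
      have hab : a = b := by
        rw [← Associates.quot_out a, ← Associates.quot_out b, Associates.mk_eq_mk_iff_associated]
        exact ⟨u * v⁻¹, by rw [Units.val_mul, ← mul_assoc, hx, Units.mul_inv_cancel_right]⟩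
      subst hab
      have hout : Quot.out a ≠ 0 := by
        rw [← Associates.mk_ne_zero, Associates.quot_out]
        exact hP a ha
      simpa using Units.ext (mul_left_cancel₀ hout hx)
    · obtain ⟨u, hu⟩ := Associates.mk_quot_out x
      exact ⟨(u, ⟨_, hx⟩), Subtype.ext hu⟩
  rw [← Nat.card_congr (Equiv.ofBijective f hf), Nat.card_prod]

theorem Nat.Coprime.eq_of_mul_eq_of_dvd_sq {a b m n : ℕ} (hmn : m.Coprime n) (hm : 0 < m)
    (hn : 0 < n) (ha : a ∣ m ^ 2) (hb : b ∣ n ^ 2) (h : a * b = m * n) : a = m ∧ b = n := by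
  have ham : a ∣ m := ((hmn.pow_left 2).coprime_dvd_left ha).dvd_of_dvd_mul_right ⟨b, h.symm⟩
  have hbn : b ∣ n :=
    ((hmn.symm.pow_left 2).coprime_dvd_left hb).dvd_of_dvd_mul_left ⟨a, by rw [← h, mul_comm]⟩
  have := Nat.le_of_dvd hm ham
  have := Nat.le_of_dvd hn hbn
  constructor <;> nlinarith

theorem chi4_eq_χ₄ (d : ℕ) : chi4 d = χ₄ d := by
  rw [ZMod.χ₄_nat_eq_if_mod_four, chi4]
  split_ifs <;> omega

namespace GaussianInt

def natNorm : ℤ[i] →* ℕ := Int.natAbsHom.toMonoidHom.comp Zsqrtd.normMonoidHom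

theorem natNorm_apply (z : ℤ[i]) : natNorm z = z.norm.natAbs := rfl

theorem natCast_natNorm (z : ℤ[i]) : (natNorm z : ℤ) = z.norm := abs_natCast_norm z

theorem natNorm_eq_zero {z : ℤ[i]} : natNorm z = 0 ↔ z = 0 := by
  rw [natNorm_apply, Int.natAbs_eq_zero, norm_eq_zero]

theorem natNorm_eq_one {z : ℤ[i]} : natNorm z = 1 ↔ IsUnit z := Zsqrtd.norm_eq_one_iff

theorem natNorm_star (z : ℤ[i]) : natNorm (star z) = natNorm z := by
  rw [natNorm_apply, natNorm_apply, Zsqrtd.norm_conj]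

theorem natNorm_natCast (q : ℕ) : natNorm q = q ^ 2 := by
  rw [natNorm_apply, Zsqrtd.norm_natCast, Int.natAbs_mul, Int.natAbs_natCast, sq]

theorem mul_star_eq_natNorm (z : ℤ[i]) : z * star z = natNorm z := by
  rw [← Zsqrtd.norm_eq_mul_conj, ← natCast_natNorm, Int.cast_natCast]

theorem natNorm_eq_iff (z : ℤ[i]) (n : ℕ) : natNorm z = n ↔ z.re ^ 2 + z.im ^ 2 = n := by
  rw [← Int.natCast_inj, natCast_natNorm, Zsqrtd.norm_def]
  ring_nf

instance : IsLocalHom natNorm := ⟨fun _ h => natNorm_eq_one.mp (Nat.isUnit_iff.mp h)⟩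

theorem natNorm_eq_of_associated {z w : ℤ[i]} (h : Associated z w) : natNorm z = natNorm w := by
  obtain ⟨u, rfl⟩ := h
  rw [map_mul, natNorm_eq_one.mpr u.isUnit, mul_one]

theorem prime_of_natNorm_prime {z : ℤ[i]} (h : (natNorm z).Prime) : Prime z :=
  (Irreducible.of_map (f := natNorm) (Nat.prime_iff.mp h |>.irreducible)).prime

theorem prime_star {z : ℤ[i]} (h : Prime z) : Prime (star z) :=
  (MulEquiv.prime_iff (starRingAut : RingAut ℤ[i])).mpr h

theorem star_dvd_star {z w : ℤ[i]} (h : z ∣ w) : star z ∣ star w := map_dvd (starRingEnd ℤ[i]) h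

def sqAddSqEquiv (n : ℕ) :
    {p : ℤ × ℤ // p.1 ^ 2 + p.2 ^ 2 = (n : ℤ)} ≃ {z : ℤ[i] // natNorm z = n} :=
  Equiv.subtypeEquiv ⟨fun p => ⟨p.1, p.2⟩, fun z => (z.re, z.im), fun _ => rfl, fun _ => rfl⟩
    fun p => (natNorm_eq_iff ⟨p.1, p.2⟩ n).symm

theorem isUnit_iff_mem {z : ℤ[i]} : IsUnit z ↔ z ∈ ({1, -1, ⟨0, 1⟩, ⟨0, -1⟩} : Finset ℤ[i]) := by
  rw [← natNorm_eq_one, natNorm_eq_iff]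
  obtain ⟨a, b⟩ := z
  constructor
  · intro h
    simp only [Nat.cast_one] at h
    have ha : -1 ≤ a ∧ a ≤ 1 := by constructor <;> nlinarith
    have hb : -1 ≤ b ∧ b ≤ 1 := by constructor <;> nlinarith
    obtain ⟨ha1, ha2⟩ := ha
    obtain ⟨hb1, hb2⟩ := hb
    interval_cases a <;> interval_cases b <;> simp_all <;> decide
  · simp only [Finset.mem_insert, Finset.mem_singleton]
    rintro (h | h | h | h) <;> simp [Zsqrtd.ext_iff] at h <;> simp [h]

theorem natCard_units : Nat.card ℤ[i]ˣ = 4 := by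
  have hrange : Set.range ((↑) : ℤ[i]ˣ → ℤ[i]) = ({1, -1, ⟨0, 1⟩, ⟨0, -1⟩} : Finset ℤ[i]) := by
    ext z
    rw [Finset.mem_coe, ← isUnit_iff_mem]
    exact ⟨fun ⟨u, hu⟩ => hu ▸ u.isUnit, fun h => ⟨h.unit, rfl⟩⟩
  rw [Nat.card_congr (Equiv.ofInjective _ Units.val_injective), hrange, Nat.card_coe_set_eq,
    Set.ncard_coe_finset]
  rfl

def assocNorm : Associates ℤ[i] →* ℕ where
  toFun := Quotient.lift natNorm fun _ _ => natNorm_eq_of_associated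
  map_one' := natNorm.map_one
  map_mul' := by
    rintro ⟨x⟩ ⟨y⟩
    exact natNorm.map_mul x y

theorem assocNorm_mk (z : ℤ[i]) : assocNorm (Associates.mk z) = natNorm z := rfl

theorem natCard_natNorm_eq_four_mul {n : ℕ} (hn : n ≠ 0) :
    Nat.card {z : ℤ[i] // natNorm z = n} = 4 * Nat.card {a // assocNorm a = n} := by
  rw [← natCard_units]
  refine Associates.natCard_subtype_mk (P := fun a => assocNorm a = n) fun a ha h0 => hn ?_
  rw [← ha, h0, ← Associates.mk_zero, assocNorm_mk, natNorm_eq_zero]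

theorem exists_mul_eq_of_natNorm_eq_mul {m n : ℕ} (hmn : m.Coprime n) (hm : 0 < m) (hn : 0 < n)
    {z : ℤ[i]} (hz : natNorm z = m * n) : ∃ x y, z = x * y ∧ natNorm x = m ∧ natNorm y = n := by
  have hdvd : z ∣ (m : ℤ[i]) * n := ⟨star z, by rw [mul_star_eq_natNorm, hz, Nat.cast_mul]⟩
  -- in the GCD domain `ℤ[i]`, a divisor of `m * n` splits into divisors of `m` and of `n`
  obtain ⟨x, y, hx, hy, rfl⟩ := exists_dvd_and_dvd_of_dvd_mul hdvd
  have hxm : natNorm x ∣ m ^ 2 := natNorm_natCast m ▸ map_dvd natNorm hx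
  have hyn : natNorm y ∣ n ^ 2 := natNorm_natCast n ▸ map_dvd natNorm hy
  exact ⟨x, y, rfl, hmn.eq_of_mul_eq_of_dvd_sq hm hn hxm hyn (by rw [← map_mul, hz])⟩

theorem isCoprime_of_coprime_natNorm {x y : ℤ[i]} (h : (natNorm x).Coprime (natNorm y)) :
    IsCoprime x y := by
  have : IsCoprime (natNorm x : ℤ[i]) (natNorm y) := by
    simpa using (Nat.isCoprime_iff_coprime.mpr h).map (Int.castRingHom ℤ[i])
  rw [← mul_star_eq_natNorm, ← mul_star_eq_natNorm] at this
  exact this.of_mul_left_left.of_mul_right_left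

theorem dvd_of_associated_mul_of_coprime {m n : ℕ} (hmn : m.Coprime n) {x y x' y' : ℤ[i]}
    (hx : natNorm x = m) (hy' : natNorm y' = n) (h : Associated (x * y) (x' * y')) : x ∣ x' :=
  (isCoprime_of_coprime_natNorm (hx ▸ hy' ▸ hmn)).dvd_of_dvd_mul_right
    ((dvd_mul_right x y).trans h.dvd)

theorem natCard_assocNorm_mul {m n : ℕ} (hmn : m.Coprime n) (hm : 0 < m) (hn : 0 < n) :
    Nat.card {a // assocNorm a = m * n} =
      Nat.card {a // assocNorm a = m} * Nat.card {a // assocNorm a = n} := by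
  let f : {a // assocNorm a = m} × {a // assocNorm a = n} → {a // assocNorm a = m * n} :=
    fun ab => ⟨ab.1.1 * ab.2.1, by rw [map_mul, ab.1.2, ab.2.2]⟩
  have hf : Function.Bijective f := by
    refine ⟨?_, fun ⟨c, hc⟩ => ?_⟩
    · rintro ⟨⟨a, ha⟩, ⟨b, hb⟩⟩ ⟨⟨a', ha'⟩, ⟨b', hb'⟩⟩ h
      obtain ⟨x, rfl⟩ := Associates.mk_surjective a
      obtain ⟨y, rfl⟩ := Associates.mk_surjective b
      obtain ⟨x', rfl⟩ := Associates.mk_surjective a'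
      obtain ⟨y', rfl⟩ := Associates.mk_surjective b'
      have hxy : Associated (x * y) (x' * y') :=
        Associates.mk_eq_mk_iff_associated.mp (congrArg Subtype.val h)
      have hxx' : Associates.mk x = Associates.mk x' :=
        Associates.mk_eq_mk_iff_associated.mpr <| associated_of_dvd_dvd
          (dvd_of_associated_mul_of_coprime hmn ha hb' hxy)
          (dvd_of_associated_mul_of_coprime hmn ha' hb hxy.symm)
      have hx0 : Associates.mk x ≠ 0 :=
        Associates.mk_ne_zero.mpr fun h0 => hm.ne' (ha.symm.trans (natNorm_eq_zero.mpr h0))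
      have hmul : Associates.mk x * Associates.mk y = Associates.mk x * Associates.mk y' := by
        simpa only [hxx'] using congrArg Subtype.val h
      have hyy' : Associates.mk y = Associates.mk y' := mul_left_cancel₀ hx0 hmul
      simp only [hxx', hyy']
    · obtain ⟨z, rfl⟩ := Associates.mk_surjective c
      obtain ⟨x, y, rfl, hx, hy⟩ := exists_mul_eq_of_natNorm_eq_mul hmn hm hn hc
      exact ⟨(⟨_, hx⟩, ⟨_, hy⟩), Subtype.ext Associates.mk_mul_mk⟩
  rw [← Nat.card_congr (Equiv.ofBijective f hf), Nat.card_prod]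

theorem associated_one_of_natNorm_eq_one {z : ℤ[i]} (hz : natNorm z = 1) : Associated z 1 :=
  associated_one_iff_isUnit.mpr (natNorm_eq_one.mp hz)

theorem exists_associated_pow_mul_star_pow {π : ℤ[i]} (hπ : Prime π) {k : ℕ} {z : ℤ[i]}
    (hz : natNorm z = natNorm π ^ k) : ∃ i ≤ k, Associated z (π ^ i * star π ^ (k - i)) := by
  induction k generalizing z with
  | zero => exact ⟨0, le_rfl, by simpa using associated_one_of_natNorm_eq_one hz⟩
  | succ k ih =>
    have hπ0 : 0 < natNorm π := Nat.pos_of_ne_zero (natNorm_eq_zero.not.mpr hπ.ne_zero)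
    have hdvd : π ∣ z * star z := by
      rw [mul_star_eq_natNorm, hz, pow_succ, Nat.cast_mul, ← mul_star_eq_natNorm, ← mul_assoc]
      exact dvd_mul_of_dvd_left (dvd_mul_left π _) _
    have hnorm : ∀ {ρ w : ℤ[i]}, natNorm ρ = natNorm π → z = ρ * w → natNorm w = natNorm π ^ k := by
      rintro ρ w hρ rfl
      rw [map_mul, hρ, pow_succ'] at hz
      exact Nat.eq_of_mul_eq_mul_left hπ0 hz
    rcases hπ.dvd_or_dvd hdvd with ⟨w, rfl⟩ | h
    · obtain ⟨i, hi, hw⟩ := ih (hnorm rfl rfl)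
      refine ⟨i + 1, by omega, ?_⟩
      rw [show k + 1 - (i + 1) = k - i by omega, pow_succ', mul_assoc]
      exact hw.mul_left π
    · obtain ⟨w, rfl⟩ : star π ∣ z := by simpa using star_dvd_star h
      obtain ⟨i, hi, hw⟩ := ih (hnorm (natNorm_star π) rfl)
      refine ⟨i, by omega, ?_⟩
      rw [show k + 1 - i = k - i + 1 by omega, pow_succ', mul_left_comm]
      exact hw.mul_left (star π)

theorem exists_associated_natCast_pow {q : ℕ} (hq : Prime (q : ℤ[i])) {k : ℕ} {z : ℤ[i]}
    (hz : natNorm z = q ^ k) : ∃ j, k = 2 * j ∧ Associated z ((q : ℤ[i]) ^ j) := by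
  induction k using Nat.strong_induction_on generalizing z with
  | _ k ih =>
  rcases k.eq_zero_or_pos with rfl | hk
  · exact ⟨0, rfl, by simpa using associated_one_of_natNorm_eq_one hz⟩
  have hq1 : 1 < q := by
    rcases q with _ | _ | q
    · exact absurd hq (by simp)
    · exact absurd hq (by simp)
    · omega
  have hdvd : (q : ℤ[i]) ∣ z * star z := by
    rw [mul_star_eq_natNorm, hz, ← Nat.succ_pred_eq_of_pos hk, pow_succ, Nat.cast_mul]
    exact dvd_mul_left _ _
  obtain ⟨w, rfl⟩ : (q : ℤ[i]) ∣ z :=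
    (hq.dvd_or_dvd hdvd).elim id fun h => by simpa using star_dvd_star h
  rw [map_mul, natNorm_natCast] at hz
  have hk2 : 2 ≤ k := (Nat.pow_dvd_pow_iff_le_right hq1).mp ⟨natNorm w, hz.symm⟩
  have hw : natNorm w = q ^ (k - 2) := by
    refine Nat.eq_of_mul_eq_mul_left (pow_pos (by omega) 2) (hz.trans ?_)
    rw [← pow_add, Nat.add_sub_cancel' hk2]
  obtain ⟨j, hj, hwj⟩ := ih (k - 2) (by omega) hw
  exact ⟨j + 1, by omega, by rw [pow_succ']; exact hwj.mul_left _⟩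

theorem natNorm_eq_natAbs (z : ℤ[i]) : natNorm z = z.re.natAbs ^ 2 + z.im.natAbs ^ 2 := by
  rw [natNorm_apply, natAbs_norm_eq, sq, sq]

theorem not_associated_star {z : ℤ[i]} (hp : (natNorm z).Prime) (h2 : natNorm z ≠ 2) :
    ¬ Associated z (star z) := by
  -- `z ∣ star z` makes the odd prime `natNorm z` divide `natNorm (z ± star z)`, i.e. `4 re²` and
  -- `4 im²`, hence `re` and `im`, so that its square divides `re² + im² = natNorm z`.
  intro h
  have key : ∀ c : ℤ, natNorm z ∣ (2 * c).natAbs ^ 2 → natNorm z ∣ c.natAbs := fun c hc => by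
    rw [Int.natAbs_mul] at hc
    exact ((hp.dvd_mul).mp (hp.dvd_of_dvd_pow hc)).resolve_left
      fun h => h2 ((Nat.prime_dvd_prime_iff_eq hp Nat.prime_two).mp h)
  have hre : natNorm z ∣ z.re.natAbs := key _ <| by
    simpa [natNorm_eq_natAbs (z + star z), two_mul] using map_dvd natNorm (dvd_add dvd_rfl h.dvd)
  have him : natNorm z ∣ z.im.natAbs := key _ <| by
    simpa [natNorm_eq_natAbs (z - star z), two_mul] using map_dvd natNorm (dvd_sub dvd_rfl h.dvd)
  have hsq : natNorm z ^ 2 ∣ natNorm z := by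
    conv_rhs => rw [natNorm_eq_natAbs]
    exact dvd_add (pow_dvd_pow_of_dvd hre 2) (pow_dvd_pow_of_dvd him 2)
  have := Nat.le_of_dvd hp.pos hsq
  nlinarith [hp.two_le]

theorem natCard_assocNorm_eq_pow_of_not_associated {π : ℤ[i]} (hπ : Prime π)
    (hπ' : ¬ Associated π (star π)) (k : ℕ) :
    Nat.card {a // assocNorm a = natNorm π ^ k} = k + 1 := by
  let g : Fin (k + 1) → Associates ℤ[i] := fun i => Associates.mk (π ^ (i : ℕ) * star π ^ (k - i))
  have hrange : Set.range g = {a | assocNorm a = natNorm π ^ k} := by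
    ext a
    obtain ⟨z, rfl⟩ := Associates.mk_surjective a
    refine ⟨?_, fun hz => ?_⟩
    · rintro ⟨i, hi⟩
      rw [Set.mem_ofPred_eq, ← hi, assocNorm_mk, map_mul, map_pow, map_pow, natNorm_star, ← pow_add,
        Nat.add_sub_cancel' (Nat.lt_succ_iff.mp i.2)]
    · obtain ⟨i, hi, hzi⟩ := exists_associated_pow_mul_star_pow hπ hz
      exact ⟨⟨i, Nat.lt_succ_of_le hi⟩, (Associates.mk_eq_mk_iff_associated.mpr hzi).symm⟩
  have hndvd : ¬ π ∣ star π := fun h => hπ' (hπ.associated_of_dvd (prime_star hπ) h)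
  have hmult : ∀ i : Fin (k + 1), emultiplicity π (π ^ (i : ℕ) * star π ^ (k - i)) = i := by
    intro i
    rw [emultiplicity_mul hπ, emultiplicity_pow_self_of_prime hπ, emultiplicity_pow hπ,
      emultiplicity_eq_zero.mpr hndvd, mul_zero, add_zero]
  have hg : Function.Injective g := fun i j hij => by
    have := emultiplicity_eq_of_associated_right (a := π)
      (Associates.mk_eq_mk_iff_associated.mp hij)
    rw [hmult, hmult] at this
    exact Fin.ext (by exact_mod_cast this)
  change Nat.card {a | assocNorm a = natNorm π ^ k} = k + 1
  rw [← hrange, Nat.card_range_of_injective hg, Nat.card_eq_fintype_card, Fintype.card_fin]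

theorem natCard_assocNorm_eq_two_pow (k : ℕ) : Nat.card {a // assocNorm a = 2 ^ k} = 1 := by
  let π : ℤ[i] := ⟨1, 1⟩
  have hπ : natNorm π = 2 := rfl
  have hπ' : Associated π (star π) :=
    ⟨(isUnit_iff_mem.mpr (by decide : (⟨0, -1⟩ : ℤ[i]) ∈ _)).unit, rfl⟩
  rw [Nat.card_eq_one_iff_exists]
  refine ⟨⟨Associates.mk (π ^ k), by rw [assocNorm_mk, map_pow, hπ]⟩, fun ⟨a, ha⟩ => ?_⟩
  obtain ⟨z, rfl⟩ := Associates.mk_surjective a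
  obtain ⟨i, hi, hzi⟩ :=
    exists_associated_pow_mul_star_pow (prime_of_natNorm_prime (hπ ▸ Nat.prime_two)) (hπ ▸ ha)
  refine Subtype.ext (Associates.mk_eq_mk_iff_associated.mpr (hzi.trans ?_))
  rw [← Nat.add_sub_cancel' hi, pow_add, Nat.add_sub_cancel_left]
  exact (hπ'.symm.pow_pow).mul_left _

theorem natCard_assocNorm_eq_pow_of_prime_natCast {q : ℕ} (hq : Prime (q : ℤ[i])) (k : ℕ) :
    Nat.card {a // assocNorm a = q ^ k} = if Even k then 1 else 0 := by
  split_ifs with hk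
  · obtain ⟨j, rfl⟩ := hk
    rw [Nat.card_eq_one_iff_exists]
    refine ⟨⟨Associates.mk ((q : ℤ[i]) ^ j), by
      rw [assocNorm_mk, map_pow, natNorm_natCast, ← pow_mul, two_mul]⟩, fun ⟨a, ha⟩ => ?_⟩
    obtain ⟨z, rfl⟩ := Associates.mk_surjective a
    obtain ⟨j', hj', hzj⟩ := exists_associated_natCast_pow hq ha
    obtain rfl : j' = j := by omega
    exact Subtype.ext (Associates.mk_eq_mk_iff_associated.mpr hzj)
  · refine @Nat.card_of_isEmpty _ ⟨fun ⟨a, ha⟩ => ?_⟩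
    obtain ⟨z, rfl⟩ := Associates.mk_surjective a
    obtain ⟨j, rfl, -⟩ := exists_associated_natCast_pow hq ha
    exact hk ⟨j, two_mul j⟩

theorem natCard_assocNorm_eq_prime_pow {p : ℕ} (hp : p.Prime) (k : ℕ) :
    (Nat.card {a // assocNorm a = p ^ k} : ℤ) = ∑ i ∈ Finset.range (k + 1), χ₄ p ^ i := by
  have := Fact.mk hp
  obtain rfl | h1 | h3 : p = 2 ∨ p % 4 = 1 ∨ p % 4 = 3 := by
    rcases hp.eq_two_or_odd with h | h <;> omega
  · rw [natCard_assocNorm_eq_two_pow, Finset.sum_range_succ', show χ₄ (2 : ℕ) = 0 by decide]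
    simp
  · obtain ⟨a, b, hab⟩ := Nat.Prime.sq_add_sq (p := p) (by omega)
    have hπ : natNorm ⟨a, b⟩ = p := by
      rw [natNorm_eq_natAbs, Int.natAbs_natCast, Int.natAbs_natCast, hab]
    rw [← hπ, natCard_assocNorm_eq_pow_of_not_associated (prime_of_natNorm_prime (hπ ▸ hp))
      (not_associated_star (hπ ▸ hp) (by omega)), hπ, ZMod.χ₄_nat_one_mod_four h1]
    simp
  · rw [natCard_assocNorm_eq_pow_of_prime_natCast
        ((prime_iff_mod_four_eq_three_of_nat_prime p).mpr h3),
      ZMod.χ₄_nat_three_mod_four h3, neg_one_geom_sum]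
    split_ifs <;> simp_all [Nat.even_add_one]

noncomputable def assocNormCount : ArithmeticFunction ℤ :=
  toArithmeticFunction fun n => Nat.card {a // assocNorm a = n}

theorem isMultiplicative_assocNormCount : assocNormCount.IsMultiplicative := by
  refine ArithmeticFunction.IsMultiplicative.iff_ne_zero.mpr ⟨?_, fun {m n} hm hn hmn => ?_⟩
  · simpa [assocNormCount, toArithmeticFunction] using natCard_assocNorm_eq_two_pow 0
  · simp only [assocNormCount, toArithmeticFunction, ArithmeticFunction.coe_mk, mul_ne_zero hm hn,
      hm, hn, if_false]
    exact_mod_cast natCard_assocNorm_mul hmn (Nat.pos_of_ne_zero hm) (Nat.pos_of_ne_zero hn)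

theorem assocNormCount_eq :
    assocNormCount = ArithmeticFunction.zeta * toArithmeticFunction (χ₄ ·) := by
  refine (ArithmeticFunction.IsMultiplicative.eq_iff_eq_on_prime_powers _
    isMultiplicative_assocNormCount _ (ArithmeticFunction.isMultiplicative_zeta.natCast.mul
      (DirichletCharacter.isMultiplicative_toArithmeticFunction χ₄))).mpr fun p k hp => ?_
  rw [ArithmeticFunction.coe_zeta_mul_apply, Nat.sum_divisors_prime_pow hp]
  simp only [assocNormCount, toArithmeticFunction, ArithmeticFunction.coe_mk,
    pow_ne_zero _ hp.ne_zero, if_false, Nat.cast_pow, map_pow]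
  exact natCard_assocNorm_eq_prime_pow hp k

theorem natCard_assocNorm_eq_sum_divisors {n : ℕ} (hn : n ≠ 0) :
    (Nat.card {a // assocNorm a = n} : ℤ) = ∑ d ∈ n.divisors, χ₄ d := by
  calc (Nat.card {a // assocNorm a = n} : ℤ) = assocNormCount n := (if_neg hn).symm
    _ = ∑ d ∈ n.divisors, toArithmeticFunction (χ₄ ·) d := by
      rw [assocNormCount_eq, ArithmeticFunction.coe_zeta_mul_apply]
    _ = ∑ d ∈ n.divisors, χ₄ d :=
      Finset.sum_congr rfl fun d hd => if_neg (Nat.pos_of_mem_divisors hd).ne'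

end GaussianInt

open GaussianInt in
theorem sum_two_squares_count (n : ℕ) (hn : 0 < n) :
    (Nat.card {p : ℤ × ℤ // p.1 ^ 2 + p.2 ^ 2 = (n : ℤ)} : ℤ) =
      4 * ∑ d ∈ n.divisors, chi4 d := by
  rw [Nat.card_congr (sqAddSqEquiv n), natCard_natNorm_eq_four_mul hn.ne', Nat.cast_mul,
    natCard_assocNorm_eq_sum_divisors hn.ne']
  simp [chi4_eq_χ₄]
end

section
/- For every positive integer n, the number of representations of 2n by the form k² + 5l² equals the number of representations of n by the form 2k² + 2kl + 3l². Equivalently, writing d(n) = #{(k,l) ∈ ℤ² : 2k² + 2kl + 3l² = n} and a(m) = #{(k,l) ∈ ℤ² : k² + 5l² = m}, one has d(n) = a(2n). -/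
lemma parity_key (a b m : ℤ) (h : a ^ 2 + 5 * b ^ 2 = 2 * m) : 2 ∣ a - b := by
  have e1 : (2:ℤ) ∣ a ^ 2 - a := by
    have := Int.even_mul_pred_self a
    have h' : a * (a - 1) = a ^ 2 - a := by ring
    exact (h' ▸ this).two_dvd
  have e2 : (2:ℤ) ∣ b ^ 2 - b := by
    have := Int.even_mul_pred_self b
    have h' : b * (b - 1) = b ^ 2 - b := by ring
    exact (h' ▸ this).two_dvd
  have e3 : (2:ℤ) ∣ a ^ 2 + 5 * b ^ 2 := ⟨m, h⟩
  generalize a ^ 2 = x at e1 e3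
  generalize b ^ 2 = y at e2 e3
  omega

theorem rep_2_2_3_eq_rep_double (n : ℕ) (hn : 0 < n) :
    Nat.card {p : ℤ × ℤ // 2 * p.1 ^ 2 + 2 * p.1 * p.2 + 3 * p.2 ^ 2 = (n : ℤ)} =
      Nat.card {p : ℤ × ℤ // p.1 ^ 2 + 5 * p.2 ^ 2 = ((2 * n : ℕ) : ℤ)} := by
  apply Nat.card_congr
  refine ⟨fun p => ⟨(2 * p.1.1 + p.1.2, p.1.2), ?_⟩,
          fun q => ⟨((q.1.1 - q.1.2) / 2, q.1.2), ?_⟩, ?_, ?_⟩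
  · have hp := p.2
    push_cast
    linear_combination 2 * hp
  · have hq := q.2
    push_cast at hq ⊢
    have hd : 2 ∣ q.1.1 - q.1.2 := parity_key _ _ _ hq
    obtain ⟨c, hc⟩ := hd
    have hdiv : (q.1.1 - q.1.2) / 2 = c := by omega
    rw [hdiv]
    have ha : q.1.1 = 2 * c + q.1.2 := by omega
    rw [ha] at hq
    have h2 : (2:ℤ) * (2 * c ^ 2 + 2 * c * (q.1.2) + 3 * (q.1.2) ^ 2) = 2 * n := by
      linear_combination hq
    linarith
  · rintro ⟨⟨k, l⟩, hp⟩
    apply Subtype.ext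
    simp only [Prod.mk.injEq]
    constructor
    · omega
    · trivial
  · rintro ⟨⟨a, b⟩, hq⟩
    apply Subtype.ext
    simp only [Prod.mk.injEq]
    push_cast at hq
    have hd : 2 ∣ a - b := parity_key _ _ _ hq
    constructor
    · omega
    · trivial
end

section
/- No positive integer is represented simultaneously by both binary quadratic forms x² + 5y² and 2x² + 2xy + 3y²: if a(n) > 0 then d(n) = 0, where a(n) and d(n) count integer representations of n by x²+5y² and 2x²+2xy+3y² respectively. -/
lemma key (n : ℕ) : 0 < n → ∀ x y u v : ℤ, x ^ 2 + 5 * y ^ 2 = (n : ℤ) →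
    u ^ 2 + 5 * v ^ 2 = 2 * (n : ℤ) → False := by
  induction n using Nat.strong_induction_on with
  | _ n ih =>
    intro hn x y u v hx hu
    have e1 : (x : ZMod 5) ^ 2 = (n : ZMod 5) := by
      have := congrArg (fun z : ℤ => (z : ZMod 5)) hx
      push_cast at this
      have h5 : (5 : ZMod 5) = 0 := by decide
      rw [h5] at this
      simpa using this
    have e2 : (u : ZMod 5) ^ 2 = 2 * (n : ZMod 5) := by
      have := congrArg (fun z : ℤ => (z : ZMod 5)) hu
      push_cast at this
      have h5 : (5 : ZMod 5) = 0 := by decide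
      rw [h5] at this
      simpa using this
    have zdec : ∀ a c m : ZMod 5, a ^ 2 = m → c ^ 2 = 2 * m → a = 0 ∧ c = 0 ∧ m = 0 := by
      decide
    obtain ⟨ha0, hc0, hm0⟩ := zdec _ _ _ e1 e2
    have hdx : (5 : ℤ) ∣ x := (ZMod.intCast_zmod_eq_zero_iff_dvd x 5).mp ha0
    have hdu : (5 : ℤ) ∣ u := (ZMod.intCast_zmod_eq_zero_iff_dvd u 5).mp hc0
    have hdn : 5 ∣ n := (ZMod.natCast_eq_zero_iff n 5).mp hm0
    obtain ⟨k, hk⟩ := hdn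
    obtain ⟨x', rfl⟩ := hdx
    obtain ⟨u', rfl⟩ := hdu
    have hkz : (n : ℤ) = 5 * (k : ℤ) := by exact_mod_cast congrArg (Nat.cast : ℕ → ℤ) hk
    refine ih k (by omega) (by omega) y x' v u' ?_ ?_
    · rw [hkz] at hx; nlinarith [hx]
    · rw [hkz] at hu; nlinarith [hu]

theorem not_both_forms (n : ℕ) (hn : 0 < n)
    (ha : 0 < Nat.card {p : ℤ × ℤ // p.1 ^ 2 + 5 * p.2 ^ 2 = (n : ℤ)}) :
    Nat.card {p : ℤ × ℤ // 2 * p.1 ^ 2 + 2 * p.1 * p.2 + 3 * p.2 ^ 2 = (n : ℤ)} = 0 := by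
  have hne : Nonempty {p : ℤ × ℤ // p.1 ^ 2 + 5 * p.2 ^ 2 = (n : ℤ)} := by
    by_contra h
    rw [not_nonempty_iff] at h
    rw [Nat.card_of_isEmpty] at ha
    exact lt_irrefl 0 ha
  obtain ⟨⟨⟨x, y⟩, hxy⟩⟩ := hne
  have hE : IsEmpty {p : ℤ × ℤ // 2 * p.1 ^ 2 + 2 * p.1 * p.2 + 3 * p.2 ^ 2 = (n : ℤ)} := by
    rw [isEmpty_subtype]
    rintro ⟨a, b⟩ hab
    exact key n hn x y (2 * a + b) b hxy (by linear_combination 2 * hab)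
  exact Nat.card_of_isEmpty
end

section
/- If p is a prime with p ≡ 1 (mod 6), then p cannot be represented by both x² + 27y² and 4x² + 2xy + 7y²: moreover p is represented by x² + 27y² if and only if 2^((p-1)/3) ≡ 1 (mod p), and in that case the number of representations by x²+27y² is 4 while the number by 4x²+2xy+7y² is 0; otherwise the number of representations by x²+27y² is 0 and by 4x²+2xy+7y² is 2. -/
/-!
Let `χ` be a cubic character of `𝔽_p` and `ζ` a primitive cube root of unity. The Jacobi sum
`J(χ, χ) = a + bζ` has norm `a² - ab + b² = p`, and `J ≡ -1` modulo `(ζ - 1)²` forces `3 ∣ b`, so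
`4p = L² + 27M²` with `L = 2a - b`, `M = b / 3`. Pairing `x` with `1 - x` in `J(χ, χ)` gives
`J ≡ χ(2)` modulo `2`, so `L` is even exactly when `χ(2) = 1`, i.e. when `2` is a cube mod `p`.

As `p` is prime, `L²` and `M²` are determined by `p`. A representation `p = x² + 27y²` yields
`4p = (2x)² + 27(2y)²`, and `p = 4x² + 2xy + 7y²` yields `4p = (4x + y)² + 27y²`; comparing
parities and residues mod `4` with `(L, M)` gives both the criterion and the counts.
-/

open Finset

theorem exists_sum_eq_add_two_nsmul_of_involutive {α M : Type*} [Fintype α] [AddCommMonoid M]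
    {σ : α → α} (hσ : Function.Involutive σ) {f : α → M} (hf : ∀ x, f (σ x) = f x) {c : α}
    (hc : ∀ x, σ x = x ↔ x = c) :
    ∃ s : Finset α, ∑ x, f x = f c + 2 • ∑ x ∈ s, f x := by
  classical
  let _ : LinearOrder α := LinearOrder.lift' _ (Fintype.equivFin α).injective
  have hσc : ∀ x, x ≠ c → σ x ≠ c := fun x hx h => hx (by rw [← hσ x, h, (hc c).2 rfl])
  refine ⟨(univ.erase c).filter (fun x => x < σ x), ?_⟩
  have hswap : ∑ x ∈ (univ.erase c).filter (fun x => ¬ x < σ x), f x =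
      ∑ x ∈ (univ.erase c).filter (fun x => x < σ x), f x := by
    refine sum_nbij' σ σ ?_ ?_ (fun x _ => hσ x) (fun x _ => hσ x) (fun x _ => (hf x).symm)
    all_goals
      intro x
      simp only [mem_filter, mem_erase, ne_eq, mem_univ, and_true, not_lt, and_imp]
      intro hx hlt
      refine ⟨hσc x hx, ?_⟩
      rw [hσ x]
    · exact lt_of_le_of_ne hlt fun h => hx ((hc x).1 h)
    · exact hlt.le
  rw [← add_sum_erase _ _ (mem_univ c), ← sum_filter_add_sum_filter_not _ (fun x => x < σ x),
    hswap, two_nsmul]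

theorem IsPrimitiveRoot.sq_add_self_add_one {R : Type*} [CommRing R] [IsDomain R] {ζ : R}
    (hζ : IsPrimitiveRoot ζ 3) : ζ ^ 2 + ζ + 1 = 0 := by
  simpa [Finset.sum_range_succ, add_comm, add_left_comm, add_assoc] using
    hζ.geom_sum_eq_zero (by norm_num)

theorem exists_int_add_int_mul_of_mem_adjoin {A : Type*} [CommRing A] {ζ : A}
    (hζ : ζ ^ 2 + ζ + 1 = 0) {w : A} (hw : w ∈ Algebra.adjoin ℤ {ζ}) :
    ∃ u v : ℤ, w = u + v * ζ := by
  induction hw using Algebra.adjoin_induction with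
  | mem x hx => exact ⟨0, 1, by rw [Set.mem_singleton_iff.1 hx]; push_cast; ring⟩
  | algebraMap r => exact ⟨r, 0, by simp⟩
  | add x y _ _ ihx ihy =>
    obtain ⟨u₁, v₁, rfl⟩ := ihx
    obtain ⟨u₂, v₂, rfl⟩ := ihy
    exact ⟨u₁ + u₂, v₁ + v₂, by push_cast; ring⟩
  | mul x y _ _ ihx ihy =>
    obtain ⟨u₁, v₁, rfl⟩ := ihx
    obtain ⟨u₂, v₂, rfl⟩ := ihy
    exact ⟨u₁ * u₂ - v₁ * v₂, u₁ * v₂ + v₁ * u₂ - v₁ * v₂, by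
      push_cast; linear_combination (v₁ * v₂ : A) * hζ⟩

theorem Complex.eq_of_int_add_int_mul_eq {ζ : ℂ} (hζ : ζ.im ≠ 0) {u v u' v' : ℤ}
    (h : (u : ℂ) + v * ζ = u' + v' * ζ) : u = u' ∧ v = v' := by
  have hv : v = v' := by
    have := congrArg Complex.im h
    simp only [Complex.add_im, Complex.intCast_im, Complex.mul_im, Complex.intCast_re, zero_add,
      zero_mul, add_zero] at this
    exact_mod_cast mul_right_cancel₀ hζ this
  subst hv
  exact ⟨by exact_mod_cast add_right_cancel h, rfl⟩

theorem IsPrimitiveRoot.im_ne_zero {ζ : ℂ} (hζ : IsPrimitiveRoot ζ 3) : ζ.im ≠ 0 := by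
  intro h
  have := congrArg Complex.re hζ.sq_add_self_add_one
  simp only [sq, Complex.add_re, Complex.mul_re, h, Complex.one_re, Complex.zero_re] at this
  nlinarith

theorem IsPrimitiveRoot.conj_eq_sq {ζ : ℂ} (hζ : IsPrimitiveRoot ζ 3) :
    starRingEnd ℂ ζ = ζ ^ 2 := by
  rw [← Complex.inv_eq_conj (hζ.norm'_eq_one (by norm_num)), inv_eq_of_mul_eq_one_right]
  rw [← pow_succ', hζ.pow_eq_one]

theorem MulChar.apply_eq_one_iff_pow_eq_one {F R : Type*} [Field F] [Fintype F]
    [CommMonoidWithZero R] {χ : MulChar F R} {a : F} (ha : a ≠ 0) :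
    χ a = 1 ↔ a ^ ((Fintype.card F - 1) / orderOf χ) = 1 := by
  classical
  obtain ⟨g, hg⟩ := IsCyclic.exists_generator (α := Fˣ)
  have hpowers : ∀ u : Fˣ, ∃ k : ℕ, g ^ k = u := fun u =>
    (isOfFinOrder_of_finite g).mem_powers_iff_mem_zpowers.2 (hg u)
  have hg_ord : orderOf g = Fintype.card F - 1 := by
    rw [orderOf_eq_card_of_forall_mem_zpowers hg, Nat.card_eq_fintype_card, Fintype.card_units]
  have hχg : orderOf (χ g) = orderOf χ := by
    refine orderOf_eq_orderOf_iff.2 fun j => ⟨fun h => MulChar.ext fun u => ?_, fun h => ?_⟩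
    · obtain ⟨k, rfl⟩ := hpowers u
      rw [MulChar.pow_apply_coe, MulChar.one_apply_coe, Units.val_pow_eq_pow_val, map_pow,
        ← pow_mul, mul_comm, pow_mul, h, one_pow]
    · rw [← MulChar.pow_apply_coe, h, MulChar.one_apply_coe]
  have hχ_dvd : orderOf χ ∣ Fintype.card F - 1 := by
    rw [← hg_ord, ← hχg]
    refine orderOf_dvd_of_pow_eq_one ?_
    rw [← map_pow, ← Units.val_pow_eq_pow_val, pow_orderOf_eq_one, Units.val_one, map_one]
  obtain ⟨m, hm⟩ := hχ_dvd
  have hm0 : 0 < m := by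
    have := Fintype.one_lt_card (α := F)
    exact Nat.pos_of_ne_zero fun h => by rw [h, mul_zero] at hm; omega
  lift a to Fˣ using ha.isUnit
  obtain ⟨k, rfl⟩ := hpowers a
  rw [Units.val_pow_eq_pow_val, map_pow, ← hχg, ← orderOf_dvd_iff_pow_eq_one, ← pow_mul,
    ← Units.val_pow_eq_pow_val, Units.val_eq_one, ← orderOf_dvd_iff_pow_eq_one, hg_ord, hm, hχg,
    Nat.mul_div_cancel_left _ (orderOf_pos χ), Nat.mul_dvd_mul_iff_right hm0]

theorem jacobiSum_mul_conj {F : Type*} [Field F] [Fintype F] {χ ψ : MulChar F ℂ} (hχ : χ ≠ 1)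
    (hψ : ψ ≠ 1) (hχψ : χ * ψ ≠ 1) :
    jacobiSum χ ψ * starRingEnd ℂ (jacobiSum χ ψ) = Fintype.card F := by
  have hstar : starRingEnd ℂ (jacobiSum χ ψ) = jacobiSum χ⁻¹ ψ⁻¹ := by
    rw [← jacobiSum_ringHomComp, ← MulChar.star_eq_inv, ← MulChar.star_eq_inv]
    rfl
  rw [hstar]
  have hchar : ringChar ℂ ≠ ringChar F := by
    simpa only [ringChar.eq_zero] using (CharP.ringChar_ne_zero_of_finite F).symm
  exact jacobiSum_mul_jacobiSum_inv hchar hχ hψ hχψ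

theorem exists_jacobiSum_self_eq_sq_add_two_mul {F R : Type*} [Field F] [Fintype F] [CommRing R]
    (h2 : (2 : F) ≠ 0) (χ : MulChar F R) :
    ∃ s : Finset F, jacobiSum χ χ = χ 2⁻¹ ^ 2 + 2 * ∑ x ∈ s, χ x * χ (1 - x) := by
  have hfix : ∀ x : F, 1 - x = x ↔ x = 2⁻¹ := fun x => by
    rw [← mul_eq_one_iff_eq_inv₀ h2, sub_eq_iff_eq_add]
    constructor <;> intro h <;> linear_combination -h
  have half : (1 : F) - 2⁻¹ = 2⁻¹ := (hfix _).2 rfl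
  obtain ⟨s, hs⟩ := exists_sum_eq_add_two_nsmul_of_involutive (σ := fun x : F => 1 - x)
    (sub_sub_cancel 1) (f := fun x => χ x * χ (1 - x)) (fun x => by rw [sub_sub_cancel, mul_comm])
    hfix
  exact ⟨s, by rw [jacobiSum, hs, half, sq, nsmul_eq_mul, Nat.cast_ofNat]⟩

section CubicCharacter

variable {F : Type*} [Field F] [Fintype F] {ζ : ℂ} {χ : MulChar F ℂ}

theorem exists_jacobiSum_eq_int_add_three_mul (hζ : IsPrimitiveRoot ζ 3) (hχ : χ ^ 3 = 1)
    (h3 : 3 ∣ Fintype.card F - 1) :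
    ∃ a b : ℤ, jacobiSum χ χ = a + 3 * b * ζ := by
  obtain ⟨z, hz, hJ⟩ := exists_jacobiSum_eq_neg_one_add (by norm_num) hχ hχ h3 hζ
  obtain ⟨u, v, rfl⟩ := exists_int_add_int_mul_of_mem_adjoin hζ.sq_add_self_add_one hz
  refine ⟨3 * v - 1, v - u, ?_⟩
  rw [hJ]
  push_cast
  linear_combination (u + v * ζ - 3 * v) * hζ.sq_add_self_add_one

theorem sq_sub_mul_add_sq_eq_card_of_jacobiSum_eq (hζ : IsPrimitiveRoot ζ 3) (hχ : orderOf χ = 3)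
    {a b : ℤ} (hJ : jacobiSum χ χ = a + b * ζ) : a ^ 2 - a * b + b ^ 2 = Fintype.card F := by
  have hχ1 : χ ≠ 1 := fun h => by rw [h, orderOf_one] at hχ; norm_num at hχ
  have hχχ : χ * χ ≠ 1 := fun h => by
    have := orderOf_dvd_of_pow_eq_one (sq χ ▸ h)
    rw [hχ] at this
    norm_num at this
  have hnorm := jacobiSum_mul_conj hχ1 hχ1 hχχ
  rw [hJ, map_add, map_mul, map_intCast, map_intCast, hζ.conj_eq_sq] at hnorm
  have : ((a ^ 2 - a * b + b ^ 2 : ℤ) : ℂ) = Fintype.card F := by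
    rw [← hnorm]
    push_cast
    linear_combination (-(a * b) - b ^ 2 * (ζ - 1) : ℂ) * hζ.sq_add_self_add_one
  exact_mod_cast this

theorem even_iff_apply_two_eq_one_of_jacobiSum_eq (hζ : IsPrimitiveRoot ζ 3) (hχ : χ ^ 3 = 1)
    (h2 : (2 : F) ≠ 0) {a b : ℤ} (hJ : jacobiSum χ χ = a + b * ζ) : Even b ↔ χ 2 = 1 := by
  have hq := hζ.sq_add_self_add_one
  have hadjoin : ∀ x, χ x ∈ Algebra.adjoin ℤ {ζ} :=
    MulChar.apply_mem_algebraAdjoin_of_pow_eq_one hχ hζ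
  obtain ⟨s, hs⟩ := exists_jacobiSum_self_eq_sq_add_two_mul h2 χ
  obtain ⟨u, v, huv⟩ := exists_int_add_int_mul_of_mem_adjoin hq
    (Subalgebra.sum_mem _ fun x _ => Subalgebra.mul_mem _ (hadjoin x) (hadjoin (1 - x)))
  have hcube : χ 2 ^ 3 = 1 := by
    rw [← MulChar.pow_apply' χ three_ne_zero, hχ, MulChar.one_apply h2.isUnit]
  have hhalf : χ 2⁻¹ ^ 2 = χ 2 := by
    calc χ 2⁻¹ ^ 2 = (χ 2⁻¹ * χ 2) ^ 2 * χ 2 := by linear_combination (-(χ 2⁻¹ ^ 2)) * hcube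
      _ = χ 2 := by rw [← map_mul, inv_mul_cancel₀ h2, map_one, one_pow, one_mul]
  rw [hhalf, huv] at hs
  have hcoord : ∀ u' v' : ℤ, (a : ℂ) + b * ζ = u' + v' * ζ → b = v' := fun _ _ h =>
    (Complex.eq_of_int_add_int_mul_eq hζ.im_ne_zero h).2
  obtain ⟨i, hi, hζi⟩ := hζ.eq_pow_of_pow_eq_one hcube
  rw [← hζi] at hs ⊢
  rw [Int.even_iff]
  interval_cases i
  · have hb := hcoord (1 + 2 * u) (2 * v) (by rw [← hJ, hs]; push_cast; ring)
    simp only [pow_zero, iff_true]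
    omega
  · have hb := hcoord (2 * u) (1 + 2 * v) (by rw [← hJ, hs]; push_cast; ring)
    simp only [pow_one, hζ.ne_one (by norm_num), iff_false]
    omega
  · have hb := hcoord (2 * u - 1) (2 * v - 1)
      (by rw [← hJ, hs]; push_cast; linear_combination hq)
    simp only [hζ.pow_ne_one_of_pos_of_lt (l := 2) (by norm_num) (by norm_num), iff_false]
    omega

theorem exists_sq_add_twentySeven_mul_sq_eq_four_mul_card (h3 : 3 ∣ Fintype.card F - 1)
    (h2 : (2 : F) ≠ 0) :
    ∃ L M : ℤ, L ^ 2 + 27 * M ^ 2 = 4 * Fintype.card F ∧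
      (Even L ↔ (2 : F) ^ ((Fintype.card F - 1) / 3) = 1) := by
  have hζ := Complex.isPrimitiveRoot_exp 3 (by norm_num)
  obtain ⟨χ, hχ⟩ := MulChar.exists_mulChar_orderOf F h3 hζ
  have hχ3 : χ ^ 3 = 1 := hχ ▸ pow_orderOf_eq_one χ
  obtain ⟨a, M, hJ⟩ := exists_jacobiSum_eq_int_add_three_mul hζ hχ3 h3
  rw [← Int.cast_ofNat, ← Int.cast_mul] at hJ
  refine ⟨2 * a - 3 * M, M, ?_, ?_⟩
  · linear_combination 4 * sq_sub_mul_add_sq_eq_card_of_jacobiSum_eq hζ hχ hJ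
  · rw [← hχ, ← MulChar.apply_eq_one_iff_pow_eq_one h2,
      ← even_iff_apply_two_eq_one_of_jacobiSum_eq hζ hχ3 h2 hJ]
    simp [parity_simps]

end CubicCharacter

theorem Nat.card_subtype_eq_finsetCard {α : Type*} {P : α → Prop} (s : Finset α)
    (h : ∀ x, P x ↔ x ∈ s) : Nat.card {x // P x} = s.card :=
  (Nat.card_congr (Equiv.subtypeEquivRight h)).trans (Nat.card_eq_finsetCard s)

section FourTimesPrime

variable {p L M : ℤ}

theorem even_iff_even_of_sq_add_twentySeven_mul_sq_eq (h : L ^ 2 + 27 * M ^ 2 = 4 * p) :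
    Even L ↔ Even M := by
  have : Even (L ^ 2 + 27 * M ^ 2) := h ▸ ⟨2 * p, by ring⟩
  simpa [parity_simps, show ¬Even (27 : ℤ) by decide] using this

theorem mul_eq_mul_of_dvd_of_sq_add_twentySeven_mul_sq_eq (hp : Prime p) {L' M' : ℤ}
    (h : L ^ 2 + 27 * M ^ 2 = 4 * p) (h' : L' ^ 2 + 27 * M' ^ 2 = 4 * p)
    (hdvd : p ∣ L * M' - L' * M) : L * M' = L' * M := by
  obtain ⟨k, hk⟩ := hdvd
  have hid : (L * L' + 27 * M * M') ^ 2 + 27 * (p * k) ^ 2 = 16 * p ^ 2 := by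
    rw [← hk]; linear_combination (L' ^ 2 + 27 * M' ^ 2) * h + 4 * p * h'
  have hk0 : k = 0 := by
    have hp2 : 0 < p ^ 2 := by have := hp.ne_zero; positivity
    have : p ^ 2 * (27 * k ^ 2) ≤ p ^ 2 * 16 := by nlinarith [sq_nonneg (L * L' + 27 * M * M')]
    nlinarith [le_of_mul_le_mul_left this hp2]
  rw [hk0, mul_zero, sub_eq_zero] at hk
  exact hk

theorem sq_eq_sq_of_sq_add_twentySeven_mul_sq_eq (hp : Prime p) {L' M' : ℤ}
    (h : L ^ 2 + 27 * M ^ 2 = 4 * p) (h' : L' ^ 2 + 27 * M' ^ 2 = 4 * p) :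
    L' ^ 2 = L ^ 2 ∧ M' ^ 2 = M ^ 2 := by
  have hprod : (L * M' - L' * M) * (L * -M' - L' * M) = p * (4 * (M ^ 2 - M' ^ 2)) := by
    linear_combination M ^ 2 * h' - M' ^ 2 * h
  have hcross : L ^ 2 * M' ^ 2 = L' ^ 2 * M ^ 2 := by
    rcases hp.dvd_mul.1 ⟨_, hprod⟩ with hdvd | hdvd
    · have := mul_eq_mul_of_dvd_of_sq_add_twentySeven_mul_sq_eq hp h h' hdvd
      linear_combination (L * M' + L' * M) * this
    · have := mul_eq_mul_of_dvd_of_sq_add_twentySeven_mul_sq_eq hp h (by rwa [neg_sq]) hdvd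
      linear_combination (L' * M - L * M') * this
  have hM : M' ^ 2 = M ^ 2 := by
    refine mul_left_cancel₀ (mul_ne_zero four_ne_zero hp.ne_zero) ?_
    linear_combination M ^ 2 * h' - M' ^ 2 * h + hcross
  exact ⟨by linear_combination h' - h - 27 * hM, hM⟩

end FourTimesPrime

section Representations

variable {p : ℤ}

theorem exists_eq_sq_add_twentySeven_mul_sq_iff_even (hp : Prime p) {L M : ℤ}
    (h : L ^ 2 + 27 * M ^ 2 = 4 * p) : (∃ x y : ℤ, p = x ^ 2 + 27 * y ^ 2) ↔ Even L := by
  constructor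
  · rintro ⟨x, y, hxy⟩
    have hL := (sq_eq_sq_of_sq_add_twentySeven_mul_sq_eq hp
      (L := 2 * x) (M := 2 * y) (by linear_combination -4 * hxy) h).1
    have hL_even : Even (L ^ 2) := by rw [hL]; exact ⟨2 * x ^ 2, by ring⟩
    exact (Int.even_pow.1 hL_even).1
  · rintro ⟨l, rfl⟩
    obtain ⟨m, rfl⟩ := (even_iff_even_of_sq_add_twentySeven_mul_sq_eq h).1 ⟨l, rfl⟩
    exact ⟨l, m, by linarith⟩

theorem card_sq_add_twentySeven_mul_sq_eq (hp : Prime p) {x₀ y₀ : ℤ}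
    (h : x₀ ^ 2 + 27 * y₀ ^ 2 = p) :
    Nat.card {z : ℤ × ℤ // z.1 ^ 2 + 27 * z.2 ^ 2 = p} = 4 := by
  have hx₀ : x₀ ≠ 0 := by
    rintro rfl
    rcases hp.irreducible.isUnit_or_isUnit (show p = 3 * (9 * y₀ ^ 2) by linear_combination -h)
      with hu | hu <;> rw [Int.isUnit_iff] at hu <;> omega
  have hy₀ : y₀ ≠ 0 := by
    rintro rfl
    exact hp.not_isSquare ⟨x₀, by rw [← h]; ring⟩
  have h4 : (2 * x₀) ^ 2 + 27 * (2 * y₀) ^ 2 = 4 * p := by linear_combination 4 * h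
  rw [Nat.card_subtype_eq_finsetCard ({x₀, -x₀} ×ˢ {y₀, -y₀}) fun z => ?_, Finset.card_product,
    Finset.card_pair (by omega), Finset.card_pair (by omega)]
  simp only [Finset.mem_product, Finset.mem_insert, Finset.mem_singleton,
    ← sq_eq_sq_iff_eq_or_eq_neg]
  constructor
  · intro hz
    obtain ⟨h1, h2⟩ := sq_eq_sq_of_sq_add_twentySeven_mul_sq_eq hp h4
      (L' := 2 * z.1) (M' := 2 * z.2) (by linear_combination 4 * hz)
    constructor <;> linarith
  · rintro ⟨h1, h2⟩
    rw [h1, h2, h]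

theorem odd_of_four_mul_sq_add_two_mul_mul_add_seven_mul_sq_eq (hodd : Odd p) {x y : ℤ}
    (h : 4 * x ^ 2 + 2 * x * y + 7 * y ^ 2 = p) : Odd y := by
  rw [← Int.not_even_iff_odd] at hodd ⊢
  rintro ⟨c, rfl⟩
  exact hodd ⟨2 * x ^ 2 + 2 * x * c + 14 * c ^ 2, by rw [← h]; ring⟩

theorem four_mul_sq_add_two_mul_mul_add_seven_mul_sq_ne (hp : Prime p) (hodd : Odd p)
    {x₀ y₀ : ℤ} (h : x₀ ^ 2 + 27 * y₀ ^ 2 = p) (x y : ℤ) :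
    4 * x ^ 2 + 2 * x * y + 7 * y ^ 2 ≠ p := by
  intro hg
  have hy := (sq_eq_sq_of_sq_add_twentySeven_mul_sq_eq hp (L := 2 * x₀) (M := 2 * y₀)
    (by linear_combination 4 * h) (L' := 4 * x + y) (M' := y) (by linear_combination 4 * hg)).2
  have hy_even : Even (y ^ 2) := by rw [hy]; exact ⟨2 * y₀ ^ 2, by ring⟩
  exact Int.not_even_iff_odd.2 (odd_of_four_mul_sq_add_two_mul_mul_add_seven_mul_sq_eq hodd hg)
    (Int.even_pow.1 hy_even).1

theorem card_four_mul_sq_add_two_mul_mul_add_seven_mul_sq_eq (hp : Prime p) {L M : ℤ}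
    (h : L ^ 2 + 27 * M ^ 2 = 4 * p) (hL : Odd L) :
    Nat.card {z : ℤ × ℤ // 4 * z.1 ^ 2 + 2 * z.1 * z.2 + 7 * z.2 ^ 2 = p} = 2 := by
  have hM : Odd M := by
    rw [← Int.not_even_iff_odd] at hL ⊢
    rwa [← even_iff_even_of_sq_add_twentySeven_mul_sq_eq h]
  obtain ⟨N, x₁, hN, rfl, c, hc⟩ : ∃ N x₁ : ℤ, N ^ 2 = M ^ 2 ∧ L = 4 * x₁ + N ∧ Odd N := by
    obtain ⟨a, rfl⟩ := hL
    obtain ⟨b, rfl⟩ := hM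
    rcases Int.even_or_odd (a - b) with ⟨c, hc⟩ | ⟨c, hc⟩
    · exact ⟨2 * b + 1, c, rfl, by omega, ⟨b, rfl⟩⟩
    · exact ⟨-(2 * b + 1), c + b + 1, by ring, by omega, ⟨-b - 1, by ring⟩⟩
  rw [← hN] at h
  rw [Nat.card_subtype_eq_finsetCard {(x₁, N), (-x₁, -N)} fun z => ?_,
    Finset.card_pair (by simp only [ne_eq, Prod.mk.injEq]; omega)]
  simp only [Finset.mem_insert, Finset.mem_singleton, Prod.ext_iff]
  constructor
  · intro hz
    obtain ⟨h1, h2⟩ := sq_eq_sq_of_sq_add_twentySeven_mul_sq_eq hp h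
      (L' := 4 * z.1 + z.2) (M' := z.2) (by linear_combination 4 * hz)
    rw [sq_eq_sq_iff_eq_or_eq_neg] at h1 h2
    omega
  · rintro (⟨h1, h2⟩ | ⟨h1, h2⟩) <;> rw [h1, h2] <;> linarith

end Representations

theorem rep_x2_27y2_prime (p : ℕ) (hp : p.Prime) (h6 : p % 6 = 1) :
    ¬((∃ x y : ℤ, (p : ℤ) = x ^ 2 + 27 * y ^ 2) ∧
        (∃ x y : ℤ, (p : ℤ) = 4 * x ^ 2 + 2 * x * y + 7 * y ^ 2)) ∧
    ((∃ x y : ℤ, (p : ℤ) = x ^ 2 + 27 * y ^ 2) ↔ (2 : ZMod p) ^ ((p - 1) / 3) = 1) ∧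
    ((∃ x y : ℤ, (p : ℤ) = x ^ 2 + 27 * y ^ 2) →
      Nat.card {z : ℤ × ℤ // z.1 ^ 2 + 27 * z.2 ^ 2 = (p : ℤ)} = 4 ∧
      Nat.card {z : ℤ × ℤ // 4 * z.1 ^ 2 + 2 * z.1 * z.2 + 7 * z.2 ^ 2 = (p : ℤ)} = 0) ∧
    (¬(∃ x y : ℤ, (p : ℤ) = x ^ 2 + 27 * y ^ 2) →
      Nat.card {z : ℤ × ℤ // z.1 ^ 2 + 27 * z.2 ^ 2 = (p : ℤ)} = 0 ∧
      Nat.card {z : ℤ × ℤ // 4 * z.1 ^ 2 + 2 * z.1 * z.2 + 7 * z.2 ^ 2 = (p : ℤ)} = 2) := by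
  have := Fact.mk hp
  have h2 : (2 : ZMod p) ≠ 0 := fun h => by
    have := Nat.le_of_dvd two_pos ((ZMod.natCast_eq_zero_iff 2 p).1 (by exact_mod_cast h))
    have := hp.two_le
    omega
  obtain ⟨L, M, h, hL⟩ := exists_sq_add_twentySeven_mul_sq_eq_four_mul_card (F := ZMod p)
    (by rw [ZMod.card]; omega) h2
  rw [ZMod.card] at h hL
  have hpZ : Prime (p : ℤ) := Nat.prime_iff_prime_int.mp hp
  have hodd : Odd (p : ℤ) := by exact_mod_cast Nat.odd_iff.2 (by omega)
  have hrep := exists_eq_sq_add_twentySeven_mul_sq_iff_even hpZ h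
  refine ⟨fun ⟨⟨x, y, hf⟩, ⟨x', y', hg⟩⟩ =>
      four_mul_sq_add_two_mul_mul_add_seven_mul_sq_ne hpZ hodd hf.symm x' y' hg.symm,
    hrep.trans hL, fun ⟨x, y, hf⟩ => ⟨card_sq_add_twentySeven_mul_sq_eq hpZ hf.symm, ?_⟩,
    fun hf => ⟨?_, card_four_mul_sq_add_two_mul_mul_add_seven_mul_sq_eq hpZ h
      (Int.not_even_iff_odd.1 (hf ∘ hrep.2))⟩⟩
  · exact Nat.card_eq_zero.2 <| .inl <| (isEmpty_subtype _).2 fun z =>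
      four_mul_sq_add_two_mul_mul_add_seven_mul_sq_ne hpZ hodd hf.symm z.1 z.2
  · exact Nat.card_eq_zero.2 <| .inl <| (isEmpty_subtype _).2 fun z hz => hf ⟨z.1, z.2, hz.symm⟩
end

section
/- Every positive integer is represented by the quaternary quadratic form x² + y² + z² + 5w²; that is, for every n ≥ 1 there exist integers x, y, z, w with n = x² + y² + z² + 5w². Equivalently, the coefficient of q^n in φ(q)³φ(q⁵) is positive for all n ≥ 0, where φ(q) = ∑_{k∈ℤ} q^{k²}. -/
/-!
If `n` is neither divisible by 4 nor `≡ 7 (mod 8)`, it is a sum of three squares; for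
`n ≡ 7 (mod 8)` apply this to `n - 5 ≡ 2 (mod 8)`, and for `4 ∣ n` descend to `n / 4`.

The three-square theorem is proved after Gauss and Dirichlet. Dirichlet's theorem gives a prime
`p` and `D ∈ {p, 2p}` with `n ∣ D + 1` and `-n` a square modulo `D`, i.e. `D ∣ n f² + 1`. Then
the integral ternary form with Gram matrix `[[n, 1, 0], [1, b, f], [0, f, c]]`, where
`n b = D + 1` and `D c = n f² + 1`, is positive definite of determinant `1` and represents `n`.
Every such form represents only sums of three squares: moving a vector realising the minimum `m`
to the first basis vector by `SL(3, ℤ)`, Hermite's bound `27 m³ ≤ 64 det` forces `m = 1`;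
completing the square in the first variable leaves a positive definite binary form of
determinant `1`, which the same argument in dimension two identifies with `y² + z²`.
-/

open Matrix
open scoped MatrixGroups

lemma Int.exists_four_mul_sq_le (m L : ℤ) (hm : 0 < m) : ∃ U, 4 * (m * U + L) ^ 2 ≤ m ^ 2 := by
  have h := Int.emod_add_mul_ediv L m
  have h0 := Int.emod_nonneg L hm.ne'
  have h1 := Int.emod_lt_of_pos L hm
  by_cases hr : 2 * (L % m) ≤ m
  · refine ⟨-(L / m), ?_⟩
    rw [show m * -(L / m) + L = L % m by linarith]
    nlinarith
  · refine ⟨-(L / m) - 1, ?_⟩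
    rw [show m * (-(L / m) - 1) + L = L % m - m by linarith]
    nlinarith

lemma Int.exists_eq_mul_isCoprime (y z : ℤ) :
    ∃ g y' z', y = g * y' ∧ z = g * z' ∧ IsCoprime y' z' := by
  by_cases h : Int.gcd y z = 0
  · obtain ⟨rfl, rfl⟩ := Int.gcd_eq_zero_iff.mp h
    exact ⟨0, 1, 0, by simp, by simp, isCoprime_one_left⟩
  · obtain ⟨g, y', z', -, hyz, rfl, rfl⟩ := Int.exists_gcd_one' (Nat.pos_of_ne_zero h)
    exact ⟨g, y', z', mul_comm _ _, mul_comm _ _, Int.isCoprime_iff_gcd_eq_one.mpr hyz⟩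

def IsPrimitiveVector {n : Type*} (v : n → ℤ) : Prop := ∀ d : ℤ, (∀ i, d ∣ v i) → IsUnit d

namespace Matrix

variable {n : Type*} [Fintype n]

lemma dotProduct_transpose_mul_mul_mulVec {R : Type*} [CommSemiring R] (A M : Matrix n n R)
    (v : n → R) : v ⬝ᵥ (Mᵀ * A * M) *ᵥ v = (M *ᵥ v) ⬝ᵥ A *ᵥ (M *ᵥ v) := by
  rw [← mulVec_mulVec, ← mulVec_mulVec, dotProduct_mulVec, vecMul_transpose]

lemma PosDef.dotProduct_mulVec_pos' {A : Matrix n n ℤ} (hA : A.PosDef) {v : n → ℤ}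
    (hv : v ≠ 0) : 0 < v ⬝ᵥ A *ᵥ v := by
  simpa using hA.dotProduct_mulVec_pos hv

lemma PosDef.exists_isMin [Nonempty n] {A : Matrix n n ℤ} (hA : A.PosDef) :
    ∃ v ≠ 0, ∀ w ≠ 0, v ⬝ᵥ A *ᵥ v ≤ w ⬝ᵥ A *ᵥ w := by
  obtain ⟨_, ⟨v, hv, rfl⟩, hmin⟩ :=
    Int.exists_least_of_bdd (P := fun m => ∃ v ≠ 0, v ⬝ᵥ A *ᵥ v = m)
      ⟨0, fun _ ⟨v, hv, h⟩ => h ▸ (hA.dotProduct_mulVec_pos' hv).le⟩ ⟨_, 1, one_ne_zero, rfl⟩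
  exact ⟨v, hv, fun w hw => hmin _ ⟨w, hw, rfl⟩⟩

lemma PosDef.isPrimitiveVector_of_isMin {A : Matrix n n ℤ} (hA : A.PosDef) {v : n → ℤ}
    (hv : v ≠ 0) (hmin : ∀ w ≠ 0, v ⬝ᵥ A *ᵥ v ≤ w ⬝ᵥ A *ᵥ w) : IsPrimitiveVector v := by
  intro d hd
  choose w hw using hd
  have hvw : v = d • w := funext hw
  have hw0 : w ≠ 0 := by rintro rfl; simp [hvw] at hv
  have hd0 : d ≠ 0 := by rintro rfl; simp [hvw] at hv
  have hval : v ⬝ᵥ A *ᵥ v = d ^ 2 * (w ⬝ᵥ A *ᵥ w) := by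
    rw [hvw, mulVec_smul, smul_dotProduct, dotProduct_smul, smul_eq_mul, smul_eq_mul]; ring
  have hle := hmin w hw0
  have hpos := hA.dotProduct_mulVec_pos' hw0
  have hd1 : d ^ 2 ≤ 1 := by nlinarith
  have : -1 ≤ d ∧ d ≤ 1 := ⟨by nlinarith, by nlinarith⟩
  exact Int.isUnit_iff.mpr (by omega)

variable [DecidableEq n]

lemma SpecialLinearGroup.mulVec_injective (M : SpecialLinearGroup n ℤ) :
    Function.Injective M.1.mulVec :=
  mulVec_injective_of_isUnit ((isUnit_iff_isUnit_det _).mpr (by simp))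

lemma SpecialLinearGroup.mulVec_surjective (M : SpecialLinearGroup n ℤ) :
    Function.Surjective M.1.mulVec :=
  mulVec_surjective_iff_isUnit.mpr ((isUnit_iff_isUnit_det _).mpr (by simp))

lemma PosDef.transpose_mul_mul_SL {A : Matrix n n ℤ} (hA : A.PosDef)
    (M : SpecialLinearGroup n ℤ) : (M.1ᵀ * A * M).PosDef := by
  simpa using hA.conjTranspose_mul_mul_same M.mulVec_injective

lemma det_transpose_mul_mul_SL (A : Matrix n n ℤ) (M : SpecialLinearGroup n ℤ) :
    (M.1ᵀ * A * M).det = A.det := by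
  simp [det_mul]

lemma isMin_transpose_mul_mul_SL {A : Matrix n n ℤ} {v : n → ℤ}
    (hmin : ∀ w ≠ 0, v ⬝ᵥ A *ᵥ v ≤ w ⬝ᵥ A *ᵥ w) (M : SpecialLinearGroup n ℤ) (i : n)
    (hM : M.1 *ᵥ Pi.single i 1 = v) (w : n → ℤ) (hw : w ≠ 0) :
    (M.1ᵀ * A * M.1) i i ≤ w ⬝ᵥ (M.1ᵀ * A * M.1) *ᵥ w := by
  have hii : (M.1ᵀ * A * M.1) i i = Pi.single i 1 ⬝ᵥ (M.1ᵀ * A * M.1) *ᵥ Pi.single i 1 := by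
    simp
  rw [hii, dotProduct_transpose_mul_mul_mulVec, dotProduct_transpose_mul_mul_mulVec, hM]
  exact hmin _ fun h => hw (M.mulVec_injective (h.trans (mulVec_zero _).symm))

end Matrix

lemma IsPrimitiveVector.isCoprime_fin_two {v : Fin 2 → ℤ} (hv : IsPrimitiveVector v) :
    IsCoprime (v 0) (v 1) :=
  IsRelPrime.isCoprime fun d h0 h1 => hv d fun i => by fin_cases i <;> assumption

lemma IsPrimitiveVector.exists_SL_mulVec_single_fin_two {v : Fin 2 → ℤ}
    (hv : IsPrimitiveVector v) : ∃ M : SL(2, ℤ), M.1 *ᵥ Pi.single 0 1 = v := by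
  obtain ⟨M, h0, h1⟩ := hv.isCoprime_fin_two.exists_SL2_row 0
  refine ⟨M.transpose, funext fun i => ?_⟩
  fin_cases i <;> simp [h0, h1]

lemma IsPrimitiveVector.exists_SL_mulVec_single_fin_three {v : Fin 3 → ℤ}
    (hv : IsPrimitiveVector v) : ∃ M : SL(3, ℤ), M.1 *ᵥ Pi.single 0 1 = v := by
  obtain ⟨g, y, z, hy, hz, u, w, huw⟩ := Int.exists_eq_mul_isCoprime (v 1) (v 2)
  obtain ⟨s, t, hst⟩ : IsCoprime (v 0) g := IsRelPrime.isCoprime fun d h0 hg =>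
    hv d fun i => by
      fin_cases i
      · exact h0
      · exact hy ▸ hg.mul_right y
      · exact hz ▸ hg.mul_right z
  refine ⟨⟨!![v 0, -t, 0; v 1, s * y, -w; v 2, s * z, u], ?_⟩, funext fun i => ?_⟩
  · rw [det_fin_three, hy, hz]
    simp
    linear_combination (s * v 0 + t * g) * huw + hst
  · fin_cases i <;> simp

namespace Matrix

lemma dotProduct_mulVec_fin_two {A : Matrix (Fin 2) (Fin 2) ℤ} (hA : A.IsSymm)
    (v : Fin 2 → ℤ) : v ⬝ᵥ A *ᵥ v = A 0 0 * v 0 ^ 2 + 2 * A 0 1 * v 0 * v 1 + A 1 1 * v 1 ^ 2 := by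
  simp [dotProduct, mulVec, Fin.sum_univ_two, hA.apply 0 1]
  ring

lemma det_fin_two_of_isSymm {A : Matrix (Fin 2) (Fin 2) ℤ} (hA : A.IsSymm) :
    A.det = A 0 0 * A 1 1 - A 0 1 ^ 2 := by
  rw [det_fin_two, hA.apply 0 1]; ring

lemma posDef_fin_two {A : Matrix (Fin 2) (Fin 2) ℤ} (hA : A.IsSymm) (h₀ : 0 < A 0 0)
    (hdet : 0 < A.det) : A.PosDef := by
  refine PosDef.of_dotProduct_mulVec_pos (isHermitian_iff_isSymm.mpr hA) fun v hv => ?_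
  rw [star_trivial, dotProduct_mulVec_fin_two hA]
  rw [det_fin_two_of_isSymm hA] at hdet
  have key : A 0 0 * (A 0 0 * v 0 ^ 2 + 2 * A 0 1 * v 0 * v 1 + A 1 1 * v 1 ^ 2) =
      (A 0 0 * v 0 + A 0 1 * v 1) ^ 2 + (A 0 0 * A 1 1 - A 0 1 ^ 2) * v 1 ^ 2 := by ring
  by_cases h₁ : v 1 = 0
  · have h₀' : v 0 ≠ 0 := fun h => hv (funext fun i => by fin_cases i <;> assumption)
    rw [h₁]
    nlinarith [sq_pos_of_ne_zero h₀']
  · refine pos_of_mul_pos_right (a := A 0 0) ?_ h₀.le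
    rw [key]
    nlinarith [sq_pos_of_ne_zero h₁, sq_nonneg (A 0 0 * v 0 + A 0 1 * v 1)]

lemma three_mul_sq_le_four_mul_det_fin_two {B : Matrix (Fin 2) (Fin 2) ℤ} (hB : B.IsSymm)
    (hpos : 0 < B 0 0) (hmin : ∀ w ≠ 0, B 0 0 ≤ w ⬝ᵥ B *ᵥ w) : 3 * B 0 0 ^ 2 ≤ 4 * B.det := by
  obtain ⟨U, hU⟩ := Int.exists_four_mul_sq_le (B 0 0) (B 0 1) hpos
  have h := hmin ![U, 1] (fun h => by simpa using congrFun h 1)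
  rw [dotProduct_mulVec_fin_two hB] at h
  simp only [cons_val_zero, cons_val_one] at h
  rw [det_fin_two_of_isSymm hB]
  nlinarith [mul_le_mul_of_nonneg_left h hpos.le]

lemma PosDef.exists_SL_isMin_fin_two {A : Matrix (Fin 2) (Fin 2) ℤ} (hA : A.PosDef) :
    ∃ M : SL(2, ℤ), ∀ w ≠ 0, (M.1ᵀ * A * M.1) 0 0 ≤
      w ⬝ᵥ (M.1ᵀ * A * M.1) *ᵥ w := by
  obtain ⟨v, hv, hmin⟩ := hA.exists_isMin
  obtain ⟨M, hM⟩ := (hA.isPrimitiveVector_of_isMin hv hmin).exists_SL_mulVec_single_fin_two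
  exact ⟨M, isMin_transpose_mul_mul_SL hmin M 0 hM⟩

lemma PosDef.exists_sum_two_sq_of_det_eq_one {A : Matrix (Fin 2) (Fin 2) ℤ} (hA : A.PosDef)
    (hdet : A.det = 1) (v : Fin 2 → ℤ) : ∃ s t, v ⬝ᵥ A *ᵥ v = s ^ 2 + t ^ 2 := by
  obtain ⟨M, hmin⟩ := hA.exists_SL_isMin_fin_two
  set B := M.1ᵀ * A * M.1 with hB_def
  have hB : B.PosDef := hA.transpose_mul_mul_SL M
  have hBsymm : B.IsSymm := isHermitian_iff_isSymm.mp hB.isHermitian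
  have hBdet : B 0 0 * B 1 1 - B 0 1 ^ 2 = 1 := by
    rw [← det_fin_two_of_isSymm hBsymm, det_transpose_mul_mul_SL, hdet]
  have h00 : B 0 0 = 1 := by
    have hbound := three_mul_sq_le_four_mul_det_fin_two hBsymm hB.diag_pos hmin
    have hpos := hB.diag_pos (i := 0)
    rw [det_fin_two_of_isSymm hBsymm, hBdet] at hbound
    nlinarith
  obtain ⟨u, rfl⟩ := M.mulVec_surjective v
  rw [← dotProduct_transpose_mul_mul_mulVec, ← hB_def, dotProduct_mulVec_fin_two hBsymm]
  exact ⟨u 0 + B 0 1 * u 1, u 1, by rw [h00] at hBdet ⊢; linear_combination (u 1) ^ 2 * hBdet⟩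

lemma PosDef.exists_three_mul_sq_le_four_mul_det_fin_two {A : Matrix (Fin 2) (Fin 2) ℤ}
    (hA : A.PosDef) : ∃ v ≠ 0, 3 * (v ⬝ᵥ A *ᵥ v) ^ 2 ≤ 4 * A.det := by
  obtain ⟨M, hmin⟩ := hA.exists_SL_isMin_fin_two
  have hB := hA.transpose_mul_mul_SL M
  refine ⟨M.1 *ᵥ Pi.single 0 1,
    fun h => by simpa using M.mulVec_injective (h.trans (mulVec_zero _).symm), ?_⟩
  rw [← dotProduct_transpose_mul_mul_mulVec, ← det_transpose_mul_mul_SL A M]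
  simpa using three_mul_sq_le_four_mul_det_fin_two (isHermitian_iff_isSymm.mp hB.isHermitian)
    hB.diag_pos hmin

/-- `A 0 0` times the Schur complement of the entry `A 0 0` in a symmetric `A`: the binary form
left over after completing the square in the first variable, without dividing by `A 0 0`. -/
def scaledSchurComplement (A : Matrix (Fin 3) (Fin 3) ℤ) : Matrix (Fin 2) (Fin 2) ℤ :=
  !![A 0 0 * A 1 1 - A 0 1 ^ 2, A 0 0 * A 1 2 - A 0 1 * A 0 2;
     A 0 0 * A 1 2 - A 0 1 * A 0 2, A 0 0 * A 2 2 - A 0 2 ^ 2]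

lemma isSymm_scaledSchurComplement (A : Matrix (Fin 3) (Fin 3) ℤ) :
    A.scaledSchurComplement.IsSymm :=
  IsSymm.ext fun i j => by fin_cases i <;> fin_cases j <;> rfl

lemma det_scaledSchurComplement {A : Matrix (Fin 3) (Fin 3) ℤ} (hA : A.IsSymm) :
    A.scaledSchurComplement.det = A 0 0 * A.det := by
  rw [scaledSchurComplement, det_fin_two_of, det_fin_three, hA.apply 0 1, hA.apply 0 2,
    hA.apply 1 2]
  ring

lemma mul_dotProduct_mulVec_fin_three {A : Matrix (Fin 3) (Fin 3) ℤ} (hA : A.IsSymm) (x : ℤ)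
    (w : Fin 2 → ℤ) : A 0 0 * (vecCons x w ⬝ᵥ A *ᵥ vecCons x w) =
      (A 0 0 * x + A 0 1 * w 0 + A 0 2 * w 1) ^ 2 + w ⬝ᵥ A.scaledSchurComplement *ᵥ w := by
  rw [dotProduct_mulVec_fin_two (isSymm_scaledSchurComplement A)]
  simp [scaledSchurComplement, dotProduct, mulVec, Fin.sum_univ_three, hA.apply 0 1,
    hA.apply 0 2, hA.apply 1 2]
  ring

lemma posDef_fin_three {A : Matrix (Fin 3) (Fin 3) ℤ} (hA : A.IsSymm) (h₀ : 0 < A 0 0)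
    (h₁ : 0 < A 0 0 * A 1 1 - A 0 1 ^ 2) (hdet : 0 < A.det) : A.PosDef := by
  have hK : A.scaledSchurComplement.PosDef :=
    posDef_fin_two (isSymm_scaledSchurComplement A) h₁
      (by rw [det_scaledSchurComplement hA]; positivity)
  refine PosDef.of_dotProduct_mulVec_pos (isHermitian_iff_isSymm.mpr hA) fun v hv => ?_
  rw [star_trivial, ← cons_head_tail v]
  refine pos_of_mul_pos_right (a := A 0 0) ?_ h₀.le
  rw [mul_dotProduct_mulVec_fin_three hA]
  by_cases htail : vecTail v = 0
  · have hhead : vecHead v ≠ 0 := fun h => hv (by rw [← cons_head_tail v, h, htail]; simp)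
    rw [htail]
    simpa using sq_pos_of_ne_zero (mul_ne_zero h₀.ne' hhead)
  · nlinarith [hK.dotProduct_mulVec_pos' htail]

lemma three_mul_sq_le_four_mul_scaledSchurComplement {A : Matrix (Fin 3) (Fin 3) ℤ}
    (hA : A.IsSymm) (hpos : 0 < A 0 0) (hmin : ∀ v ≠ 0, A 0 0 ≤ v ⬝ᵥ A *ᵥ v)
    {w : Fin 2 → ℤ} (hw : w ≠ 0) :
    3 * A 0 0 ^ 2 ≤ 4 * (w ⬝ᵥ A.scaledSchurComplement *ᵥ w) := by
  obtain ⟨x, hx⟩ := Int.exists_four_mul_sq_le (A 0 0) (A 0 1 * w 0 + A 0 2 * w 1) hpos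
  have hne : vecCons x w ≠ 0 := fun h => hw (by simpa using congrArg vecTail h)
  nlinarith [mul_le_mul_of_nonneg_left (hmin _ hne) hpos.le,
    mul_dotProduct_mulVec_fin_three hA x w]

lemma PosDef.exists_SL_isMin_fin_three {A : Matrix (Fin 3) (Fin 3) ℤ} (hA : A.PosDef) :
    ∃ M : SL(3, ℤ), ∀ w ≠ 0, (M.1ᵀ * A * M.1) 0 0 ≤ w ⬝ᵥ (M.1ᵀ * A * M.1) *ᵥ w := by
  obtain ⟨v, hv, hmin⟩ := hA.exists_isMin
  obtain ⟨M, hM⟩ := (hA.isPrimitiveVector_of_isMin hv hmin).exists_SL_mulVec_single_fin_three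
  exact ⟨M, isMin_transpose_mul_mul_SL hmin M 0 hM⟩

lemma twentySeven_mul_pow_three_le_sixtyFour_mul_det_fin_three {A : Matrix (Fin 3) (Fin 3) ℤ}
    (hA : A.IsSymm) (hpos : 0 < A 0 0) (hmin : ∀ v ≠ 0, A 0 0 ≤ v ⬝ᵥ A *ᵥ v) :
    27 * A 0 0 ^ 3 ≤ 64 * A.det := by
  have hlow := fun w (hw : w ≠ 0) =>
    three_mul_sq_le_four_mul_scaledSchurComplement hA hpos hmin hw
  have hK : A.scaledSchurComplement.PosDef :=
    .of_dotProduct_mulVec_pos (isHermitian_iff_isSymm.mpr (isSymm_scaledSchurComplement A))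
      fun w hw => by rw [star_trivial]; nlinarith [hlow w hw]
  obtain ⟨w, hw, hup⟩ := hK.exists_three_mul_sq_le_four_mul_det_fin_two
  rw [det_scaledSchurComplement hA] at hup
  have hsq := pow_le_pow_left₀ (by positivity) (hlow w hw) 2
  refine le_of_mul_le_mul_left ?_ hpos
  nlinarith

lemma PosDef.exists_sum_three_sq_of_det_eq_one {A : Matrix (Fin 3) (Fin 3) ℤ} (hA : A.PosDef)
    (hdet : A.det = 1) (v : Fin 3 → ℤ) : ∃ r s t, v ⬝ᵥ A *ᵥ v = r ^ 2 + s ^ 2 + t ^ 2 := by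
  obtain ⟨M, hmin⟩ := hA.exists_SL_isMin_fin_three
  set B := M.1ᵀ * A * M.1 with hB_def
  have hB : B.PosDef := hA.transpose_mul_mul_SL M
  have hBsymm : B.IsSymm := isHermitian_iff_isSymm.mp hB.isHermitian
  have hBdet : B.det = 1 := by rw [det_transpose_mul_mul_SL, hdet]
  have h00 : B 0 0 = 1 := by
    have := twentySeven_mul_pow_three_le_sixtyFour_mul_det_fin_three hBsymm hB.diag_pos hmin
    have := hB.diag_pos (i := 0)
    by_contra hne
    nlinarith [pow_le_pow_left₀ zero_le_two (show 2 ≤ B 0 0 by omega) 3]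
  have hK : B.scaledSchurComplement.PosDef :=
    .of_dotProduct_mulVec_pos (isHermitian_iff_isSymm.mpr (isSymm_scaledSchurComplement B))
      fun w hw => by
        rw [star_trivial]
        nlinarith [three_mul_sq_le_four_mul_scaledSchurComplement hBsymm hB.diag_pos hmin hw]
  obtain ⟨u, rfl⟩ := M.mulVec_surjective v
  obtain ⟨s, t, hst⟩ := hK.exists_sum_two_sq_of_det_eq_one
    (by rw [det_scaledSchurComplement hBsymm, h00, hBdet, one_mul]) (vecTail u)
  have key := mul_dotProduct_mulVec_fin_three hBsymm (vecHead u) (vecTail u)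
  rw [cons_head_tail, h00, one_mul, one_mul, hst] at key
  rw [← dotProduct_transpose_mul_mul_mulVec, ← hB_def, key]
  exact ⟨vecHead u + B 0 1 * vecTail u 0 + B 0 2 * vecTail u 1, s, t, by ring⟩

end Matrix

lemma Int.exists_sum_three_sq_of_dvd {N D f : ℤ} (hN : 0 < N) (hD : 0 < D) (hND : N ∣ D + 1)
    (hDf : D ∣ N * f ^ 2 + 1) : ∃ x y z : ℤ, N = x ^ 2 + y ^ 2 + z ^ 2 := by
  obtain ⟨b, hb⟩ := hND
  obtain ⟨c, hc⟩ := hDf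
  let A : Matrix (Fin 3) (Fin 3) ℤ := !![N, 1, 0; 1, b, f; 0, f, c]
  have hdet : A.det = 1 := by
    simp [A, Matrix.det_fin_three]
    linear_combination -c * hb - hc
  have hA : A.PosDef := Matrix.posDef_fin_three
    (Matrix.IsSymm.ext fun i j => by fin_cases i <;> fin_cases j <;> rfl)
    hN (by simp [A]; linarith) (by rw [hdet]; norm_num)
  obtain ⟨x, y, z, h⟩ := hA.exists_sum_three_sq_of_det_eq_one hdet (Pi.single 0 1)
  exact ⟨x, y, z, by simpa [A] using h⟩

lemma Int.exists_dvd_mul_sq_add_one {p : ℕ} [Fact p.Prime] {a : ℤ} (ha : ¬(p : ℤ) ∣ a)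
    (hJ : jacobiSym (-a) p = 1) : ∃ f : ℤ, (p : ℤ) ∣ a * f ^ 2 + 1 := by
  obtain ⟨r, hr⟩ := ZMod.isSquare_of_jacobiSym_eq_one hJ
  have ha' : (a : ZMod p) ≠ 0 := by rwa [Ne, ZMod.intCast_zmod_eq_zero_iff_dvd]
  obtain ⟨f, hf⟩ := ZMod.intCast_surjective (r / (a : ZMod p))
  refine ⟨f, (ZMod.intCast_zmod_eq_zero_iff_dvd _ p).mp ?_⟩
  push_cast at hr ⊢
  rw [hf]
  field_simp
  linear_combination -hr

lemma Nat.exists_prime_gt_modEq_modEq (B : ℕ) {k m : ℕ} (hk : k ≠ 0) (hm : m ≠ 0)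
    (hkm : k.Coprime m) {a b : ℤ} (ha : IsCoprime a k) (hb : IsCoprime b m) :
    ∃ p > B, p.Prime ∧ (p : ℤ) ≡ a [ZMOD k] ∧ (p : ℤ) ≡ b [ZMOD m] := by
  obtain ⟨u, v, huv⟩ := Nat.isCoprime_iff_coprime.mpr hkm
  have hck : a * v * m + b * u * k = a + k * (u * (b - a)) := by linear_combination a * huv
  have hcm : a * v * m + b * u * k = b + m * (v * (a - b)) := by linear_combination b * huv
  have hc : IsCoprime (a * v * m + b * u * k) ((k * m : ℕ) : ℤ) := by
    rw [Nat.cast_mul]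
    exact IsCoprime.mul_right (hck ▸ ha.add_mul_left_left _) (hcm ▸ hb.add_mul_left_left _)
  obtain ⟨p, hpB, hp, hpc⟩ := Nat.forall_exists_prime_gt_and_zmodEq B (by positivity) hc
  rw [Nat.cast_mul] at hpc
  refine ⟨p, hpB, hp, (hpc.of_mul_right _).trans ?_, (hpc.of_mul_left _).trans ?_⟩
  · rw [hck]; exact Int.modEq_add_fac_self
  · rw [hcm]; exact Int.modEq_add_fac_self

lemma Nat.exists_sum_three_sq_of_prime {n p : ℕ} (hp : p.Prime) (hn : 0 < n) (hnp : n < p)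
    (hdvd : (n : ℤ) ∣ p + 1) (hJ : jacobiSym (-n) p = 1) :
    ∃ x y z : ℤ, (n : ℤ) = x ^ 2 + y ^ 2 + z ^ 2 := by
  have := Fact.mk hp
  obtain ⟨f, hf⟩ := Int.exists_dvd_mul_sq_add_one
    (Int.natCast_dvd_natCast.not.mpr (Nat.not_dvd_of_pos_of_lt hn hnp)) hJ
  exact Int.exists_sum_three_sq_of_dvd (by exact_mod_cast hn) (by exact_mod_cast hp.pos) hdvd
    hf

lemma Nat.exists_sum_three_sq_of_two_mul_prime {n p : ℕ} (hp : p.Prime) (hp2 : p ≠ 2)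
    (hn : Odd n) (hnp : n < p) (hdvd : (n : ℤ) ∣ 2 * p + 1) (hJ : jacobiSym (-n) p = 1) :
    ∃ x y z : ℤ, (n : ℤ) = x ^ 2 + y ^ 2 + z ^ 2 := by
  have := Fact.mk hp
  have hpodd : Odd (p : ℤ) := by exact_mod_cast hp.odd_of_ne_two hp2
  have hnodd : Odd (n : ℤ) := by exact_mod_cast hn
  obtain ⟨f, hf⟩ := Int.exists_dvd_mul_sq_add_one
    (Int.natCast_dvd_natCast.not.mpr (Nat.not_dvd_of_pos_of_lt hn.pos hnp)) hJ
  -- replacing `f` by `f + p` if necessary makes `n * f ^ 2 + 1` even as well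
  obtain ⟨g, hg, hpg⟩ : ∃ g : ℤ, Odd g ∧ (p : ℤ) ∣ n * g ^ 2 + 1 := by
    rcases Int.even_or_odd f with hfe | hfo
    · refine ⟨f + p, hfe.add_odd hpodd, ?_⟩
      have : (n : ℤ) * (f + p) ^ 2 + 1 = n * f ^ 2 + 1 + p * (n * (2 * f + p)) := by ring
      rw [this]
      exact hf.add (dvd_mul_right _ _)
    · exact ⟨f, hfo, hf⟩
  have h2g : (2 : ℤ) ∣ n * g ^ 2 + 1 := even_iff_two_dvd.mp (hnodd.mul (hg.pow)).add_one
  have h2p : IsCoprime (2 : ℤ) p :=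
    Nat.isCoprime_iff_coprime.mpr ((Nat.coprime_primes Nat.prime_two hp).mpr hp2.symm)
  exact Int.exists_sum_three_sq_of_dvd (by exact_mod_cast hn.pos) (by have := hp.pos; omega) hdvd
    (h2p.mul_dvd h2g hpg)

lemma Nat.exists_sum_three_sq_of_mod_four_eq_one {n : ℕ} (hn : n % 4 = 1) :
    ∃ x y z : ℤ, (n : ℤ) = x ^ 2 + y ^ 2 + z ^ 2 := by
  have hodd : Odd n := Nat.odd_iff.mpr (by omega)
  obtain ⟨p, hnp, hp, hp4, hpn⟩ := Nat.exists_prime_gt_modEq_modEq n (k := 4) (m := n)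
    (by norm_num) (by omega) (Nat.Coprime.pow_left 2 (Nat.coprime_two_left.mpr hodd))
    isCoprime_one_left isCoprime_one_left.neg_left
  have hp4' : p % 4 = 1 := by unfold Int.ModEq at hp4; omega
  refine exists_sum_three_sq_of_prime hp (by omega) hnp (by simpa using hpn.symm.dvd) ?_
  rw [jacobiSym.neg _ (hp.odd_of_ne_two (by omega)), ZMod.χ₄_nat_one_mod_four hp4', one_mul,
    jacobiSym.quadratic_reciprocity_one_mod_four' hodd hp4', jacobiSym.mod_left' hpn,
    jacobiSym.at_neg_one hodd, ZMod.χ₄_nat_one_mod_four hn]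

lemma Nat.exists_sum_three_sq_of_mod_eight_eq_three {n : ℕ} (hn : n % 8 = 3) :
    ∃ x y z : ℤ, (n : ℤ) = x ^ 2 + y ^ 2 + z ^ 2 := by
  have hodd : Odd n := Nat.odd_iff.mpr (by omega)
  obtain ⟨j, hj⟩ : ∃ j, n = 2 * j + 1 := ⟨n / 2, by omega⟩
  obtain ⟨p, hnp, hp, hp4, hpj⟩ := Nat.exists_prime_gt_modEq_modEq n (k := 4) (m := n)
    (by norm_num) (by omega) (Nat.Coprime.pow_left 2 (Nat.coprime_two_left.mpr hodd))
    isCoprime_one_left (⟨-2, 1, by push_cast [hj]; ring⟩ : IsCoprime (j : ℤ) n)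
  have hp4' : p % 4 = 1 := by unfold Int.ModEq at hp4; omega
  have hpodd : Odd p := hp.odd_of_ne_two (by omega)
  have hdvd : (n : ℤ) ∣ 2 * p + 1 := by
    have : (2 * p + 1 : ℤ) = 2 * (p - j) + n := by rw [hj]; push_cast; ring
    rw [this]
    exact (hpj.symm.dvd.mul_left 2).add dvd_rfl
  have hJ : jacobiSym p n = 1 := by
    have h := jacobiSym.mul_left 2 p n
    rw [jacobiSym.mod_left'
      (Int.modEq_iff_dvd.mpr (by simpa using hdvd) : (-1 : ℤ) ≡ 2 * p [ZMOD n]).symm,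
      jacobiSym.at_neg_one hodd, jacobiSym.at_two hodd, ZMod.χ₄_nat_three_mod_four (by omega),
      ZMod.χ₈_nat_eq_if_mod_eight, if_neg (by omega), if_neg (by omega)] at h
    linarith
  refine exists_sum_three_sq_of_two_mul_prime hp (by omega) hodd hnp hdvd ?_
  rw [jacobiSym.neg _ hpodd, ZMod.χ₄_nat_one_mod_four hp4', one_mul,
    jacobiSym.quadratic_reciprocity_one_mod_four' hodd hp4', hJ]

lemma Nat.exists_sum_three_sq_of_two_mul {m p : ℕ} (hm : Odd m) (hp : p.Prime) (hmp : 2 * m < p)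
    (hp4 : p % 4 = 1) (hpm : (p : ℤ) ≡ -1 [ZMOD m]) (hχ : ZMod.χ₈ p = ZMod.χ₄ m) :
    ∃ x y z : ℤ, ((2 * m : ℕ) : ℤ) = x ^ 2 + y ^ 2 + z ^ 2 := by
  have hpodd : Odd p := hp.odd_of_ne_two (by omega)
  refine exists_sum_three_sq_of_prime hp (by have := hm.pos; omega) hmp ?_ ?_
  · have h2 : (2 : ℤ) ∣ p + 1 := even_iff_two_dvd.mp (by exact_mod_cast hpodd.add_one)
    push_cast
    exact (Nat.isCoprime_iff_coprime.mpr (Nat.coprime_two_left.mpr hm)).mul_dvd h2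
      (by simpa using hpm.symm.dvd)
  · push_cast
    rw [show -(2 * (m : ℤ)) = -1 * (2 * m) by ring, jacobiSym.mul_left, jacobiSym.mul_left,
      jacobiSym.at_neg_one hpodd, ZMod.χ₄_nat_one_mod_four hp4, jacobiSym.at_two hpodd, hχ,
      jacobiSym.quadratic_reciprocity_one_mod_four' hm hp4, jacobiSym.mod_left' hpm,
      jacobiSym.at_neg_one hm]
    rcases Nat.odd_mod_four_iff.mp (Nat.odd_iff.mp hm) with h | h
    · rw [ZMod.χ₄_nat_one_mod_four h]; norm_num
    · rw [ZMod.χ₄_nat_three_mod_four h]; norm_num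

lemma Nat.exists_sum_three_sq_of_mod_four_eq_two {n : ℕ} (hn : n % 4 = 2) :
    ∃ x y z : ℤ, (n : ℤ) = x ^ 2 + y ^ 2 + z ^ 2 := by
  obtain ⟨m, rfl⟩ : ∃ m, n = 2 * m := ⟨n / 2, by omega⟩
  have hm : Odd m := Nat.odd_iff.mpr (by omega)
  have hcop : Nat.Coprime 8 m := Nat.Coprime.pow_left 3 (Nat.coprime_two_left.mpr hm)
  -- `p ≡ 1` or `5 (mod 8)` is chosen so that `J(2 | p) = J(-1 | m)`
  rcases Nat.odd_mod_four_iff.mp (Nat.odd_iff.mp hm) with h | h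
  · obtain ⟨p, hnp, hp, hp8, hpm⟩ := Nat.exists_prime_gt_modEq_modEq (2 * m) (by norm_num)
      hm.pos.ne' hcop isCoprime_one_left isCoprime_one_left.neg_left
    have hp8' : p % 8 = 1 := by unfold Int.ModEq at hp8; omega
    refine exists_sum_three_sq_of_two_mul hm hp hnp (by omega) hpm ?_
    rw [ZMod.χ₈_nat_eq_if_mod_eight, if_neg (by omega), if_pos (by omega),
      ZMod.χ₄_nat_one_mod_four h]
  · obtain ⟨p, hnp, hp, hp8, hpm⟩ := Nat.exists_prime_gt_modEq_modEq (2 * m) (by norm_num)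
      hm.pos.ne' hcop (⟨5, -3, by norm_num⟩ : IsCoprime (5 : ℤ) (8 : ℕ))
      isCoprime_one_left.neg_left
    have hp8' : p % 8 = 5 := by unfold Int.ModEq at hp8; omega
    refine exists_sum_three_sq_of_two_mul hm hp hnp (by omega) hpm ?_
    rw [ZMod.χ₈_nat_eq_if_mod_eight, if_neg (by omega), if_neg (by omega),
      ZMod.χ₄_nat_three_mod_four h]

theorem Nat.exists_sum_three_sq {n : ℕ} (h4 : ¬4 ∣ n) (h7 : n % 8 ≠ 7) :
    ∃ x y z : ℤ, (n : ℤ) = x ^ 2 + y ^ 2 + z ^ 2 := by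
  rcases (by omega : n % 4 = 1 ∨ n % 8 = 3 ∨ n % 4 = 2) with h | h | h
  · exact exists_sum_three_sq_of_mod_four_eq_one h
  · exact exists_sum_three_sq_of_mod_eight_eq_three h
  · exact exists_sum_three_sq_of_mod_four_eq_two h

theorem universal_x2_y2_z2_5w2_general (n : ℕ) :
    ∃ x y z w : ℤ, (n : ℤ) = x ^ 2 + y ^ 2 + z ^ 2 + 5 * w ^ 2 := by
  induction n using Nat.strong_induction_on with
  | _ n ih =>
  by_cases h4 : 4 ∣ n
  · obtain ⟨m, rfl⟩ := h4
    rcases m.eq_zero_or_pos with rfl | hm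
    · exact ⟨0, 0, 0, 0, by simp⟩
    obtain ⟨x, y, z, w, h⟩ := ih m (by omega)
    exact ⟨2 * x, 2 * y, 2 * z, 2 * w, by push_cast; rw [h]; ring⟩
  by_cases h7 : n % 8 = 7
  · obtain ⟨x, y, z, h⟩ := Nat.exists_sum_three_sq (n := n - 5) (by omega) (by omega)
    exact ⟨x, y, z, 1, by push_cast [show 5 ≤ n by omega] at h; linarith⟩
  · obtain ⟨x, y, z, h⟩ := Nat.exists_sum_three_sq h4 h7
    exact ⟨x, y, z, 0, by rw [h]; ring⟩

theorem universal_x2_y2_z2_5w2 (n : ℕ) (hn : 1 ≤ n) :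
    ∃ x y z w : ℤ, (n : ℤ) = x ^ 2 + y ^ 2 + z ^ 2 + 5 * w ^ 2 :=
  universal_x2_y2_z2_5w2_general n
end
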